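/- arXiv:2106.03795 — 7 statements merged into one kernel-verified Lean document; each statement's English description precedes it below -/
import Mathlib

section
/- Let f_w(x) = W_L φ(W_{L-1} φ(··· φ(W_1 x))) be an L-layer ReLU network with weight matrices W_l, and let f_{w'} be another network with the same architecture. If ‖w'_l − w_l‖_F ≤ υ_l for all l (Frobenius norm) and ‖x‖ ≤ B, then ‖f_{w'}(x) − f_w(x)‖ ≤ B·(∏_{l=1}^L (‖w_l‖ + υ_l) − ∏_{l=1}^L ‖w_l‖). -/
open Finset

/-- Frobenius norm of a real matrix. -/
noncomputable def frob {n m : ℕ} (M : Matrix (Fin n) (Fin m) ℝ) : ℝ :=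
  Real.sqrt (∑ i, ∑ j, (M i j) ^ 2)

/-- Output of the first `l` layers of a fully connected ReLU network:
`f⁰ = x`, `f¹ = W₀ x`, `f^{l+1} = W_l φ(f^l)` where `φ` is the ReLU. -/
noncomputable def layerOut (h : ℕ → ℕ) (W : ∀ l : ℕ, Matrix (Fin (h (l + 1))) (Fin (h l)) ℝ) :
    (l : ℕ) → EuclideanSpace ℝ (Fin (h 0)) → EuclideanSpace ℝ (Fin (h l))
  | 0, x => x
  | 1, x => WithLp.toLp 2 ((W 0).mulVec x)
  | (l + 2), x => WithLp.toLp 2 ((W (l + 1)).mulVec (fun i => max (layerOut h W (l + 1) x i) 0))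

noncomputable def toE {n m : ℕ} (M : Matrix (Fin n) (Fin m) ℝ) :
    EuclideanSpace ℝ (Fin n × Fin m) := WithLp.toLp 2 (fun p : Fin n × Fin m => M p.1 p.2)

noncomputable def mulVecE {n m : ℕ} (M : Matrix (Fin n) (Fin m) ℝ)
    (v : EuclideanSpace ℝ (Fin m)) : EuclideanSpace ℝ (Fin n) := WithLp.toLp 2 (M.mulVec v)

noncomputable def reluE {n : ℕ} (u : EuclideanSpace ℝ (Fin n)) :
    EuclideanSpace ℝ (Fin n) := WithLp.toLp 2 (fun i => max (u i) 0)

lemma frob_eq {n m : ℕ} (M : Matrix (Fin n) (Fin m) ℝ) : frob M = ‖toE M‖ := by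
  rw [EuclideanSpace.norm_eq, frob]
  congr 1
  simp [Fintype.sum_prod_type, toE, Real.norm_eq_abs, sq_abs]

lemma frob_nonneg {n m : ℕ} (M : Matrix (Fin n) (Fin m) ℝ) : 0 ≤ frob M := by
  rw [frob_eq]; exact norm_nonneg _

lemma frob_add_le {n m : ℕ} (A B : Matrix (Fin n) (Fin m) ℝ) :
    frob (A + B) ≤ frob A + frob B := by
  rw [frob_eq, frob_eq, frob_eq]
  exact norm_add_le (toE A) (toE B)

lemma norm_mulVecE_le {n m : ℕ} (M : Matrix (Fin n) (Fin m) ℝ) (v : EuclideanSpace ℝ (Fin m)) :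
    ‖mulVecE M v‖ ≤ frob M * ‖v‖ := by
  rw [EuclideanSpace.norm_eq, EuclideanSpace.norm_eq, frob,
    ← Real.sqrt_mul (by positivity)]
  apply Real.sqrt_le_sqrt
  rw [Finset.sum_mul]
  apply Finset.sum_le_sum
  intro i _
  calc ‖mulVecE M v i‖ ^ 2 = (∑ j, M i j * v j) ^ 2 := by
        simp [mulVecE, Matrix.mulVec, dotProduct, Real.norm_eq_abs, sq_abs]
    _ ≤ (∑ j, (M i j) ^ 2) * (∑ j, (v j) ^ 2) :=
        Finset.sum_mul_sq_le_sq_mul_sq _ _ _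
    _ = (∑ j, (M i j) ^ 2) * ∑ j, ‖v j‖ ^ 2 := by
        simp [Real.norm_eq_abs, sq_abs]

lemma norm_reluE_le {n : ℕ} (u : EuclideanSpace ℝ (Fin n)) : ‖reluE u‖ ≤ ‖u‖ := by
  rw [EuclideanSpace.norm_eq, EuclideanSpace.norm_eq]
  apply Real.sqrt_le_sqrt
  apply Finset.sum_le_sum
  intro i _
  have : |max (u i) 0| ≤ |u i| := by
    rcases le_or_gt (u i) 0 with hu | hu
    · simp [max_eq_right hu]
    · simp [max_eq_left hu.le]
  simpa [reluE, Real.norm_eq_abs] using pow_le_pow_left₀ (abs_nonneg _) this 2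

lemma norm_reluE_sub_le {n : ℕ} (u v : EuclideanSpace ℝ (Fin n)) :
    ‖reluE u - reluE v‖ ≤ ‖u - v‖ := by
  rw [EuclideanSpace.norm_eq, EuclideanSpace.norm_eq]
  apply Real.sqrt_le_sqrt
  apply Finset.sum_le_sum
  intro i _
  have : |max (u i) 0 - max (v i) 0| ≤ |u i - v i| := abs_max_sub_max_le_abs _ _ _
  simpa [reluE, Real.norm_eq_abs, PiLp.sub_apply] using pow_le_pow_left₀ (abs_nonneg _) this 2

lemma layerOut_one (h : ℕ → ℕ) (W) (x : EuclideanSpace ℝ (Fin (h 0))) :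
    layerOut h W 1 x = mulVecE (W 0) x := rfl

lemma layerOut_ss (h : ℕ → ℕ) (W) (l : ℕ) (x : EuclideanSpace ℝ (Fin (h 0))) :
    layerOut h W (l + 2) x = mulVecE (W (l + 1)) (reluE (layerOut h W (l + 1) x)) := rfl

lemma layer_bound (h : ℕ → ℕ) (W : ∀ l : ℕ, Matrix (Fin (h (l + 1))) (Fin (h l)) ℝ)
    (B : ℝ) (x : EuclideanSpace ℝ (Fin (h 0))) (hx : ‖x‖ ≤ B) :
    ∀ l, ‖layerOut h W l x‖ ≤ B * ∏ i ∈ Finset.range l, frob (W i) := by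
  have hB : (0:ℝ) ≤ B := le_trans (norm_nonneg x) hx
  intro l
  induction l with
  | zero => simpa [layerOut] using hx
  | succ k ih =>
    match k, ih with
    | 0, _ =>
      rw [layerOut_one]
      calc ‖mulVecE (W 0) x‖ ≤ frob (W 0) * ‖x‖ := norm_mulVecE_le _ _
        _ ≤ frob (W 0) * B := by
            exact mul_le_mul_of_nonneg_left hx (frob_nonneg _)
        _ = B * ∏ i ∈ Finset.range 1, frob (W i) := by simp [mul_comm]
    | (m + 1), ih =>
      rw [layerOut_ss]
      calc ‖mulVecE (W (m+1)) (reluE (layerOut h W (m+1) x))‖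
          ≤ frob (W (m+1)) * ‖reluE (layerOut h W (m+1) x)‖ := norm_mulVecE_le _ _
        _ ≤ frob (W (m+1)) * ‖layerOut h W (m+1) x‖ :=
            mul_le_mul_of_nonneg_left (norm_reluE_le _) (frob_nonneg _)
        _ ≤ frob (W (m+1)) * (B * ∏ i ∈ Finset.range (m+1), frob (W i)) :=
            mul_le_mul_of_nonneg_left ih (frob_nonneg _)
        _ = B * ∏ i ∈ Finset.range (m+2), frob (W i) := by
            rw [Finset.prod_range_succ (fun i => frob (W i)) (m+1)]; ring

lemma mulVecE_sub {n m : ℕ} (A B : Matrix (Fin n) (Fin m) ℝ) (v : EuclideanSpace ℝ (Fin m)) :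
    mulVecE A v - mulVecE B v = mulVecE (A - B) v := by
  ext i
  simp [mulVecE, Matrix.sub_mulVec, PiLp.sub_apply]

lemma diff_bound (h : ℕ → ℕ) (W W' : ∀ l : ℕ, Matrix (Fin (h (l + 1))) (Fin (h l)) ℝ)
    (υ : ℕ → ℝ) (B : ℝ) (x : EuclideanSpace ℝ (Fin (h 0))) (hx : ‖x‖ ≤ B) :
    ∀ l, (∀ i < l, frob (W' i - W i) ≤ υ i) →
    ‖layerOut h W' l x - layerOut h W l x‖ ≤
      B * (∏ i ∈ Finset.range l, (frob (W i) + υ i) - ∏ i ∈ Finset.range l, frob (W i)) := by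
  have hB : (0:ℝ) ≤ B := le_trans (norm_nonneg x) hx
  intro l
  induction l with
  | zero => intro _; simp [layerOut]
  | succ k ih =>
    intro hW
    have hυ : ∀ i < k + 1, 0 ≤ υ i := fun i hi => le_trans (frob_nonneg _) (hW i hi)
    have hfr : ∀ i < k + 1, frob (W' i) ≤ frob (W i) + υ i := by
      intro i hi
      calc frob (W' i) = frob (W i + (W' i - W i)) := by congr 1; abel
        _ ≤ frob (W i) + frob (W' i - W i) := frob_add_le _ _
        _ ≤ frob (W i) + υ i := by linarith [hW i hi]
    match k, ih, hυ, hfr, hW with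
    | 0, _, hυ, hfr, hW =>
      rw [layerOut_one, layerOut_one, mulVecE_sub]
      calc ‖mulVecE (W' 0 - W 0) x‖ ≤ frob (W' 0 - W 0) * ‖x‖ := norm_mulVecE_le _ _
        _ ≤ υ 0 * B := by
            apply mul_le_mul (hW 0 (by norm_num)) hx (norm_nonneg _) (hυ 0 (by norm_num))
        _ = B * (∏ i ∈ Finset.range 1, (frob (W i) + υ i) - ∏ i ∈ Finset.range 1, frob (W i)) := by
            simp; ring
    | (m + 1), ih, hυ, hfr, hW =>
      have ih' := ih (fun i hi => hW i (Nat.lt_succ_of_lt hi))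
      set u' := layerOut h W' (m+1) x with hu'
      set u := layerOut h W (m+1) x with hu
      -- bound on ‖u'‖
      have hu'le : ‖u'‖ ≤ B * ∏ i ∈ Finset.range (m+1), (frob (W i) + υ i) := by
        calc ‖u'‖ ≤ B * ∏ i ∈ Finset.range (m+1), frob (W' i) := layer_bound h W' B x hx _
          _ ≤ B * ∏ i ∈ Finset.range (m+1), (frob (W i) + υ i) := by
              apply mul_le_mul_of_nonneg_left _ hB
              apply Finset.prod_le_prod (fun i _ => frob_nonneg _)
              exact fun i hi => hfr i (Nat.lt_succ_of_lt (Finset.mem_range.mp hi))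
      have key : layerOut h W' (m+2) x - layerOut h W (m+2) x =
          mulVecE (W' (m+1) - W (m+1)) (reluE u') +
            mulVecE (W (m+1)) (reluE u' - reluE u) := by
        ext i
        simp only [layerOut_ss, ← hu', ← hu, mulVecE, PiLp.sub_apply, PiLp.add_apply,
          Matrix.sub_mulVec, Matrix.mulVec_sub, Pi.sub_apply]
        have : ((W (m+1)).mulVec fun j => (reluE u' - reluE u) j) i =
            (W (m+1)).mulVec (reluE u') i - (W (m+1)).mulVec (reluE u) i := by
          simp [Matrix.mulVec, dotProduct, PiLp.sub_apply, mul_sub,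
            Finset.sum_sub_distrib]
        rw [this]
        ring
      rw [key]
      set P := ∏ i ∈ Finset.range (m+1), frob (W i)
      set Q := ∏ i ∈ Finset.range (m+1), (frob (W i) + υ i)
      have hQ0 : 0 ≤ Q := Finset.prod_nonneg fun i hi =>
        add_nonneg (frob_nonneg _) (hυ i (Nat.lt_succ_of_lt (Finset.mem_range.mp hi)))
      have step1 : ‖mulVecE (W' (m+1) - W (m+1)) (reluE u')‖ ≤ υ (m+1) * (B * Q) := by
        calc ‖mulVecE (W' (m+1) - W (m+1)) (reluE u')‖
            ≤ frob (W' (m+1) - W (m+1)) * ‖reluE u'‖ := norm_mulVecE_le _ _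
          _ ≤ υ (m+1) * (B * Q) := by
              apply mul_le_mul (hW (m+1) (by omega))
                (le_trans (norm_reluE_le _) hu'le) (norm_nonneg _) (hυ (m+1) (by omega))
      have step2 : ‖mulVecE (W (m+1)) (reluE u' - reluE u)‖ ≤
          frob (W (m+1)) * (B * (Q - P)) := by
        calc ‖mulVecE (W (m+1)) (reluE u' - reluE u)‖
            ≤ frob (W (m+1)) * ‖reluE u' - reluE u‖ := norm_mulVecE_le _ _
          _ ≤ frob (W (m+1)) * (B * (Q - P)) := by
              apply mul_le_mul_of_nonneg_left
                (le_trans (norm_reluE_sub_le _ _) ih') (frob_nonneg _)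
      calc ‖mulVecE (W' (m+1) - W (m+1)) (reluE u') + mulVecE (W (m+1)) (reluE u' - reluE u)‖
          ≤ ‖mulVecE (W' (m+1) - W (m+1)) (reluE u')‖ +
              ‖mulVecE (W (m+1)) (reluE u' - reluE u)‖ := norm_add_le _ _
        _ ≤ υ (m+1) * (B * Q) + frob (W (m+1)) * (B * (Q - P)) := add_le_add step1 step2
        _ = B * ((frob (W (m+1)) + υ (m+1)) * Q - frob (W (m+1)) * P) := by ring
        _ = B * (∏ i ∈ Finset.range (m+2), (frob (W i) + υ i) -
              ∏ i ∈ Finset.range (m+2), frob (W i)) := by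
            rw [Finset.prod_range_succ (fun i => frob (W i) + υ i) (m+1),
              Finset.prod_range_succ (fun i => frob (W i)) (m+1)]
            ring

theorem network_perturbation_bound
    (L : ℕ) (hL : 1 ≤ L) (h : ℕ → ℕ)
    (W W' : ∀ l : ℕ, Matrix (Fin (h (l + 1))) (Fin (h l)) ℝ)
    (υ : ℕ → ℝ) (hW : ∀ l < L, frob (W' l - W l) ≤ υ l)
    (B : ℝ) (x : EuclideanSpace ℝ (Fin (h 0))) (hx : ‖x‖ ≤ B) :
    ‖layerOut h W' L x - layerOut h W L x‖ ≤
      B * (∏ l ∈ Finset.range L, (frob (W l) + υ l) - ∏ l ∈ Finset.range L, frob (W l)) := by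
  exact diff_bound h W W' υ B x hx L hW
end

section
/- Let f_w be an L-layer ReLU network with ‖x‖ ≤ B, suppose ‖w'_l − w_l‖ ≤ υ ≤ R/√L for all l and ‖w‖ ≤ R (where w is the concatenation of all vectorized layers). Then ‖f_{w'}(x) − f_w(x)‖ ≤ B·L·(2R/√L)^{L−1}·υ. -/
open Finset

lemma tangent_pow (n : ℕ) (c x : ℝ) (hc : 0 ≤ c) (hx : 0 ≤ x) :
    c ^ (n+1) + (n+1) * c ^ n * (x - c) ≤ x ^ (n+1) := by
  have hid := geom_sum₂_mul x c (n+1)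
  have hconst : ∑ i ∈ range (n+1), c ^ i * c ^ (n+1-1-i) = (n+1 : ℝ) * c ^ n := by
    rw [Finset.sum_congr rfl (g := fun _ => c ^ n) (fun i hi => by
      rw [← pow_add]; congr 1; simp only [mem_range] at hi; omega)]
    rw [Finset.sum_const, card_range]; push_cast; ring
  rcases le_total c x with hcx | hcx
  · have hsum : (n+1 : ℝ) * c ^ n ≤ ∑ i ∈ range (n+1), x ^ i * c ^ (n+1-1-i) := by
      rw [← hconst]
      apply Finset.sum_le_sum; intro i hi
      exact mul_le_mul_of_nonneg_right (pow_le_pow_left₀ hc hcx i) (pow_nonneg hc _)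
    nlinarith [mul_le_mul_of_nonneg_right hsum (sub_nonneg.2 hcx)]
  · have hsum : ∑ i ∈ range (n+1), x ^ i * c ^ (n+1-1-i) ≤ (n+1 : ℝ) * c ^ n := by
      rw [← hconst]
      apply Finset.sum_le_sum; intro i hi
      exact mul_le_mul_of_nonneg_right (pow_le_pow_left₀ hx hcx i) (pow_nonneg hc _)
    nlinarith [mul_le_mul_of_nonpos_right hsum (sub_nonpos.2 hcx)]

lemma step_amgm (n : ℕ) (s u x : ℝ) (hs : 0 ≤ s) (hx : 0 ≤ x)
    (hx1 : ((n:ℝ)+2) * x = ((n:ℝ)+1) * s + u) :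
    u * s ^ (n+1) ≤ x ^ (n+2) := by
  have ht := tangent_pow (n+1) s x hs hx
  push_cast at ht
  have h3 : u * s ^ (n+1) = s ^ (n+2) + ((n:ℝ)+1+1) * s ^ (n+1) * (x - s) := by
    linear_combination (-(s^(n+1))) * hx1
  linarith
lemma step_esymm (n : ℕ) (s u x : ℝ) (hs : 0 ≤ s) (hx : 0 ≤ x)
    (hx1 : ((n:ℝ)+2) * x = ((n:ℝ)+1) * s + u) :
    s ^ (n+1) + u * (((n:ℝ)+1) * s ^ n) ≤ ((n:ℝ)+2) * x ^ (n+1) := by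
  have ht := tangent_pow n s x hs hx
  have h2 := mul_le_mul_of_nonneg_left ht (by positivity : (0:ℝ) ≤ (n:ℝ)+2)
  have h3 : ((n:ℝ)+2) * (s ^ (n+1) + ((n:ℝ)+1) * s ^ n * (x - s))
      = s ^ (n+1) + u * (((n:ℝ)+1) * s ^ n) := by
    linear_combination (((n:ℝ)+1)*s^n) * hx1
  linarith

lemma amgm_esymm (b : ℕ → ℝ) (hb : ∀ i, 0 ≤ b i) :
    ∀ L : ℕ, (∏ j ∈ range L, b j ≤ ((∑ j ∈ range L, b j) / L) ^ L) ∧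
      (∑ k ∈ range L, ∏ j ∈ (range L).erase k, b j
        ≤ L * ((∑ j ∈ range L, b j) / L) ^ (L - 1)) := by
  intro M
  induction M with
  | zero => simp
  | succ L IH =>
    rcases Nat.eq_zero_or_pos L with rfl | hLpos
    · constructor
      · simp
      · simp
    · obtain ⟨n, rfl⟩ : ∃ n, L = n + 1 := ⟨L - 1, by omega⟩
      have hS : (0:ℝ) ≤ ∑ j ∈ range (n+1), b j := Finset.sum_nonneg fun i _ => hb i
      set S : ℝ := ∑ j ∈ range (n+1), b j with hSdef
      set u : ℝ := b (n+1) with hu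
      have hunn : 0 ≤ u := hb (n+1)
      set s : ℝ := S / (n+1) with hsdef
      have hsnn : 0 ≤ s := div_nonneg hS (by positivity)
      set x : ℝ := (S + u) / ((n:ℝ)+2) with hxdef
      have hxnn : 0 ≤ x := div_nonneg (by positivity) (by positivity)
      have hx1 : ((n:ℝ)+2) * x = ((n:ℝ)+1) * s + u := by
        rw [hxdef, hsdef]; field_simp
      have hsum1 : ∑ j ∈ range (n+2), b j = S + u := by
        rw [Finset.sum_range_succ]
      have hxgoal : ((∑ j ∈ range (n+2), b j) / ((n+2 : ℕ) : ℝ)) = x := by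
        rw [hsum1, hxdef]; norm_num
      have hIH1 : ∏ j ∈ range (n+1), b j ≤ s ^ (n+1) := by
        rw [hsdef]; exact_mod_cast IH.1
      have hIH2 : ∑ k ∈ range (n+1), ∏ j ∈ (range (n+1)).erase k, b j
          ≤ ((n:ℝ)+1) * s ^ n := by
        have h := IH.2
        simp only [Nat.add_sub_cancel] at h
        rw [hsdef]; exact_mod_cast h
      constructor
      · rw [hxgoal, Finset.prod_range_succ]
        calc (∏ j ∈ range (n+1), b j) * u ≤ s ^ (n+1) * u :=
              mul_le_mul_of_nonneg_right hIH1 hunn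
          _ = u * s ^ (n+1) := by ring
          _ ≤ x ^ (n+2) := step_amgm n s u x hsnn hxnn hx1
      · rw [hxgoal]
        have hsplit : ∑ k ∈ range (n+2), ∏ j ∈ (range (n+2)).erase k, b j
            = (∑ k ∈ range (n+1), u * ∏ j ∈ (range (n+1)).erase k, b j)
              + ∏ j ∈ range (n+1), b j := by
          rw [Finset.sum_range_succ]
          congr 1
          · apply Finset.sum_congr rfl
            intro k hk
            have hkL : (n+1 : ℕ) ≠ k := by simp at hk; omega
            rw [Finset.range_add_one, Finset.erase_insert_of_ne hkL,
              Finset.prod_insert (by simp)]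
          · rw [Finset.range_add_one, Finset.erase_insert (by simp)]
        rw [hsplit]
        have e1 : ∑ k ∈ range (n+1), u * ∏ j ∈ (range (n+1)).erase k, b j
            ≤ u * (((n:ℝ)+1) * s ^ n) := by
          rw [← Finset.mul_sum]
          exact mul_le_mul_of_nonneg_left hIH2 hunn
        have e2 : ∏ j ∈ range (n+1), b j ≤ s ^ (n+1) := hIH1
        have := step_esymm n s u x hsnn hxnn hx1
        have hcast : ((n+2 : ℕ) : ℝ) = (n:ℝ)+2 := by push_cast; ring
        rw [show (n+2) - 1 = n+1 from rfl, hcast]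
        linarith

lemma esymm_split (b : ℕ → ℝ) (n : ℕ) :
    ∑ k ∈ range (n+1), ∏ j ∈ (range (n+1)).erase k, b j
      = (∑ k ∈ range n, b n * ∏ j ∈ (range n).erase k, b j) + ∏ j ∈ range n, b j := by
  rw [Finset.sum_range_succ]
  congr 1
  · apply Finset.sum_congr rfl
    intro k hk
    have hkL : (n : ℕ) ≠ k := by simp at hk; omega
    rw [Finset.range_add_one, Finset.erase_insert_of_ne hkL,
      Finset.prod_insert (by simp)]
  · rw [Finset.range_add_one, Finset.erase_insert (by simp)]

lemma prod_sub_prod_le (c : ℕ → ℝ) (υ : ℝ) (hc : ∀ i, 0 ≤ c i) (hυ : 0 ≤ υ) :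
    ∀ L : ℕ, ∏ j ∈ range L, (c j + υ) - ∏ j ∈ range L, c j
      ≤ υ * ∑ k ∈ range L, ∏ j ∈ (range L).erase k, (c j + υ) := by
  intro L
  induction L with
  | zero => simp
  | succ L IH =>
    rw [Finset.prod_range_succ, Finset.prod_range_succ, esymm_split]
    set P : ℝ := ∏ j ∈ range L, (c j + υ) with hP
    set Q : ℝ := ∏ j ∈ range L, c j with hQ
    set e : ℝ := ∑ k ∈ range L, ∏ j ∈ (range L).erase k, (c j + υ) with he
    have hQP : Q ≤ P := by
      apply Finset.prod_le_prod (fun i _ => hc i) (fun i _ => by linarith [hc i])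
    have hbL : 0 ≤ c L + υ := by linarith [hc L]
    have h1 : (c L + υ) * (P - Q) ≤ (c L + υ) * (υ * e) :=
      mul_le_mul_of_nonneg_left IH hbL
    have h2 : υ * Q ≤ υ * P := mul_le_mul_of_nonneg_left hQP hυ
    have hsum : ∑ k ∈ range L, (c L + υ) * ∏ j ∈ (range L).erase k, (c j + υ)
        = (c L + υ) * e := by rw [he, Finset.mul_sum]
    rw [hsum]
    nlinarith [h1, h2]

noncomputable def evec {k : ℕ} (v : Fin k → ℝ) : EuclideanSpace ℝ (Fin k) :=
  (WithLp.equiv 2 (Fin k → ℝ)).symm v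

lemma evec_norm {k : ℕ} (v : Fin k → ℝ) :
    ‖evec v‖ = Real.sqrt (∑ i, (v i) ^ 2) := by
  rw [EuclideanSpace.norm_eq]
  congr 1
  simp [evec, Real.norm_eq_abs, sq_abs]

noncomputable def mvec {n m : ℕ} (M : Matrix (Fin n) (Fin m) ℝ) :
    EuclideanSpace ℝ (Fin n × Fin m) :=
  (WithLp.equiv 2 ((Fin n × Fin m) → ℝ)).symm (fun p => M p.1 p.2)

lemma frob_eq_norm {n m : ℕ} (M : Matrix (Fin n) (Fin m) ℝ) :
    frob M = ‖mvec M‖ := by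
  rw [EuclideanSpace.norm_eq, frob]
  congr 1
  rw [Fintype.sum_prod_type]
  simp [mvec, Real.norm_eq_abs, sq_abs]

lemma frob_mulVec {n m : ℕ} (M : Matrix (Fin n) (Fin m) ℝ) (v : Fin m → ℝ) :
    ‖evec (M.mulVec v)‖ ≤ frob M * ‖evec v‖ := by
  rw [evec_norm, evec_norm, frob, ← Real.sqrt_mul (by positivity)]
  apply Real.sqrt_le_sqrt
  rw [Finset.sum_mul]
  apply Finset.sum_le_sum
  intro i _
  have : M.mulVec v i = ∑ j, M i j * v j := rfl
  rw [this]
  exact Finset.sum_mul_sq_le_sq_mul_sq _ _ _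

lemma relu_sub_le {k : ℕ} (u v : Fin k → ℝ) :
    ‖evec (fun i => max (u i) 0) - evec (fun i => max (v i) 0)‖ ≤ ‖evec u - evec v‖ := by
  have h1 : evec (fun i => max (u i) 0) - evec (fun i => max (v i) 0)
      = evec (fun i => max (u i) 0 - max (v i) 0) := rfl
  have h2 : evec u - evec v = evec (fun i => u i - v i) := rfl
  rw [h1, h2, evec_norm, evec_norm]
  apply Real.sqrt_le_sqrt
  apply Finset.sum_le_sum
  intro i _
  rw [← sq_abs, ← sq_abs (u i - v i)]
  exact pow_le_pow_left₀ (abs_nonneg _) (abs_max_sub_max_le_abs _ _ _) 2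

lemma relu_norm_le {k : ℕ} (u : Fin k → ℝ) :
    ‖evec (fun i => max (u i) 0)‖ ≤ ‖evec u‖ := by
  rw [evec_norm, evec_norm]
  apply Real.sqrt_le_sqrt
  apply Finset.sum_le_sum
  intro i _
  rw [← sq_abs, ← sq_abs (u i)]
  apply pow_le_pow_left₀ (abs_nonneg _) ?_ 2
  rw [abs_of_nonneg (le_max_right _ _)]
  exact max_le (le_abs_self _) (abs_nonneg _)

theorem network_perturbation_bound_uniform
    (L : ℕ) (hL : 1 ≤ L) (h : ℕ → ℕ)
    (W W' : ∀ l : ℕ, Matrix (Fin (h (l + 1))) (Fin (h l)) ℝ)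
    (υ R B : ℝ)
    (hW : ∀ l < L, frob (W' l - W l) ≤ υ)
    (hυ : υ ≤ R / Real.sqrt L)
    (hR : Real.sqrt (∑ l ∈ Finset.range L, frob (W l) ^ 2) ≤ R)
    (x : EuclideanSpace ℝ (Fin (h 0))) (hx : ‖x‖ ≤ B) :
    ‖layerOut h W' L x - layerOut h W L x‖ ≤
      B * L * (2 * R / Real.sqrt L) ^ (L - 1) * υ := by
  have hυ0 : 0 ≤ υ := le_trans (frob_nonneg _) (hW 0 hL)
  have hB0 : 0 ≤ B := le_trans (norm_nonneg _) hx
  have hR0 : 0 ≤ R := le_trans (Real.sqrt_nonneg _) hR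
  set c : ℕ → ℝ := fun l => frob (W l) with hc
  have hc0 : ∀ l, 0 ≤ c l := fun l => frob_nonneg _
  have hW'le : ∀ l < L, frob (W' l) ≤ c l + υ := by
    intro l hl
    have : W' l = W l + (W' l - W l) := by abel
    calc frob (W' l) = frob (W l + (W' l - W l)) := by rw [← this]
      _ ≤ frob (W l) + frob (W' l - W l) := frob_add_le _ _
      _ ≤ c l + υ := by exact add_le_add le_rfl (hW l hl)
  -- main induction
  have key : ∀ l, l ≤ L →
      ‖layerOut h W' l x - layerOut h W l x‖
        ≤ B * (∏ j ∈ range l, (c j + υ) - ∏ j ∈ range l, c j) ∧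
      ‖layerOut h W l x‖ ≤ B * ∏ j ∈ range l, c j := by
    intro l
    induction l with
    | zero =>
      intro _
      constructor
      · simp [layerOut]
      · simpa [layerOut] using hx
    | succ n ih =>
      intro hl
      have hnl : n < L := by omega
      match n, ih, hnl with
      | 0, _, hnl =>
        have e1 : layerOut h W' 1 x - layerOut h W 1 x
            = evec (((W' 0) - (W 0)).mulVec x) := by
          show evec ((W' 0).mulVec x) - evec ((W 0).mulVec x) = _
          rw [Matrix.sub_mulVec]; rfl
        have hx' : ‖evec (x : Fin (h 0) → ℝ)‖ = ‖x‖ := rfl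
        constructor
        · rw [e1]
          calc ‖evec (((W' 0) - (W 0)).mulVec x)‖
              ≤ frob ((W' 0) - (W 0)) * ‖evec (x : Fin (h 0) → ℝ)‖ := frob_mulVec _ _
            _ ≤ υ * B := by
                rw [hx']
                exact mul_le_mul (hW 0 hnl) hx (norm_nonneg _) hυ0
            _ = B * (∏ j ∈ range 1, (c j + υ) - ∏ j ∈ range 1, c j) := by
                simp [Finset.prod_range_one]; ring
        · show ‖evec ((W 0).mulVec x)‖ ≤ _
          calc ‖evec ((W 0).mulVec x)‖
              ≤ frob (W 0) * ‖evec (x : Fin (h 0) → ℝ)‖ := frob_mulVec _ _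
            _ ≤ c 0 * B := by rw [hx']; exact mul_le_mul_of_nonneg_left hx (hc0 0)
            _ = B * ∏ j ∈ range 1, c j := by simp [Finset.prod_range_one]; ring
      | (m+1), ih, hnl =>
        obtain ⟨ihd, ihn⟩ := ih (by omega)
        set f : Fin (h (m+1)) → ℝ := (layerOut h W (m+1) x).ofLp with hf
        set f' : Fin (h (m+1)) → ℝ := (layerOut h W' (m+1) x).ofLp with hf'
        set g : Fin (h (m+1)) → ℝ := fun i => max (f i) 0 with hg
        set g' : Fin (h (m+1)) → ℝ := fun i => max (f' i) 0 with hg'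
        set P : ℝ := ∏ j ∈ range (m+1), (c j + υ) with hP
        set Q : ℝ := ∏ j ∈ range (m+1), c j with hQ
        have hQ0 : 0 ≤ Q := Finset.prod_nonneg (fun i _ => hc0 i)
        have hgd : ‖evec g' - evec g‖ ≤ B * (P - Q) := le_trans (relu_sub_le f' f) ihd
        have hgn : ‖evec g‖ ≤ B * Q := le_trans (relu_norm_le f) ihn
        have e1 : layerOut h W' (m+2) x - layerOut h W (m+2) x
            = evec ((W' (m+1)).mulVec (g' - g)) + evec (((W' (m+1)) - (W (m+1))).mulVec g) := by
          show evec ((W' (m+1)).mulVec g' - (W (m+1)).mulVec g) = evec ((W' (m+1)).mulVec (g' - g) + ((W' (m+1)) - (W (m+1))).mulVec g)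
          congr 1
          rw [Matrix.mulVec_sub, Matrix.sub_mulVec]
          abel
        have hsub : evec (g' - g) = evec g' - evec g := rfl
        constructor
        · rw [e1]
          calc ‖evec ((W' (m+1)).mulVec (g' - g)) + evec (((W' (m+1)) - (W (m+1))).mulVec g)‖
              ≤ ‖evec ((W' (m+1)).mulVec (g' - g))‖ + ‖evec (((W' (m+1)) - (W (m+1))).mulVec g)‖ :=
                norm_add_le _ _
            _ ≤ frob (W' (m+1)) * ‖evec (g' - g)‖ + frob ((W' (m+1)) - (W (m+1))) * ‖evec g‖ :=
                add_le_add (frob_mulVec _ _) (frob_mulVec _ _)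
            _ ≤ (c (m+1) + υ) * (B * (P - Q)) + υ * (B * Q) := by
                apply add_le_add
                · apply mul_le_mul (hW'le (m+1) hnl) (by rw [hsub]; exact hgd) (norm_nonneg _)
                  linarith [hc0 (m+1)]
                · exact mul_le_mul (hW (m+1) hnl) hgn (norm_nonneg _) hυ0
            _ = B * (∏ j ∈ range (m+2), (c j + υ) - ∏ j ∈ range (m+2), c j) := by
                rw [Finset.prod_range_succ (fun j => c j + υ) (m+1),
                  Finset.prod_range_succ c (m+1), hP, hQ]
                ring
        · have e2 : layerOut h W (m+2) x = evec ((W (m+1)).mulVec g) := by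
            rfl
          rw [e2]
          calc ‖evec ((W (m+1)).mulVec g)‖ ≤ frob (W (m+1)) * ‖evec g‖ := frob_mulVec _ _
            _ ≤ c (m+1) * (B * Q) := mul_le_mul_of_nonneg_left hgn (hc0 (m+1))
            _ = B * ∏ j ∈ range (m+2), c j := by
                rw [Finset.prod_range_succ c (m+1), hQ]; ring
  -- final assembly
  have hkey := (key L le_rfl).1
  set P : ℝ := ∏ j ∈ range L, (c j + υ) with hP
  set Q : ℝ := ∏ j ∈ range L, c j with hQ
  set e : ℝ := ∑ k ∈ range L, ∏ j ∈ (range L).erase k, (c j + υ) with he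
  have htel : P - Q ≤ υ * e := prod_sub_prod_le c υ hc0 hυ0 L
  have hLpos : (0:ℝ) < L := by exact_mod_cast hL
  have hsL : Real.sqrt L * Real.sqrt L = (L:ℝ) := Real.mul_self_sqrt (le_of_lt hLpos)
  have hsLpos : 0 < Real.sqrt L := Real.sqrt_pos.2 hLpos
  have hsL2 : Real.sqrt L ^ 2 = (L:ℝ) := Real.sq_sqrt (le_of_lt hLpos)
  -- sum bound
  have hsumc : ∑ j ∈ range L, c j ≤ Real.sqrt L * R := by
    have h1 : (∑ j ∈ range L, c j) ^ 2 ≤ (L:ℝ) * ∑ j ∈ range L, (c j) ^ 2 := by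
      have := Finset.sum_mul_sq_le_sq_mul_sq (range L) (fun _ => (1:ℝ)) c
      simpa [Finset.card_range] using this
    have h2 : ∑ j ∈ range L, c j ≤ Real.sqrt ((L:ℝ) * ∑ j ∈ range L, (c j) ^ 2) := by
      have hy : (0:ℝ) ≤ (L:ℝ) * ∑ j ∈ range L, (c j) ^ 2 :=
        mul_nonneg (le_of_lt hLpos) (Finset.sum_nonneg fun i _ => sq_nonneg _)
      have hx0 : (0:ℝ) ≤ ∑ j ∈ range L, c j := Finset.sum_nonneg fun i _ => hc0 i
      exact (Real.le_sqrt hx0 hy).2 h1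
    calc ∑ j ∈ range L, c j ≤ Real.sqrt ((L:ℝ) * ∑ j ∈ range L, (c j) ^ 2) := h2
      _ = Real.sqrt L * Real.sqrt (∑ j ∈ range L, (c j) ^ 2) := Real.sqrt_mul (le_of_lt hLpos) _
      _ ≤ Real.sqrt L * R := mul_le_mul_of_nonneg_left hR (Real.sqrt_nonneg _)
  have hsumb : ∑ j ∈ range L, (c j + υ) ≤ 2 * Real.sqrt L * R := by
    rw [Finset.sum_add_distrib, Finset.sum_const, Finset.card_range, nsmul_eq_mul]
    have h3 : (L:ℝ) * υ ≤ Real.sqrt L * R := by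
      have : (L:ℝ) * υ ≤ (L:ℝ) * (R / Real.sqrt L) := mul_le_mul_of_nonneg_left hυ (le_of_lt hLpos)
      calc (L:ℝ) * υ ≤ (L:ℝ) * (R / Real.sqrt L) := this
        _ = Real.sqrt L * R := by
            field_simp
            linear_combination (-R) * hsL2
    linarith [hsumc]
  -- mean bound
  set t : ℝ := 2 * R / Real.sqrt L with ht
  have hmean : (∑ j ∈ range L, (c j + υ)) / L ≤ t := by
    rw [div_le_iff₀ hLpos, ht]
    calc ∑ j ∈ range L, (c j + υ) ≤ 2 * Real.sqrt L * R := hsumb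
      _ = 2 * R / Real.sqrt L * L := by
          rw [div_mul_eq_mul_div, eq_div_iff (ne_of_gt hsLpos)]
          linear_combination (2*R) * hsL
  have hmean0 : 0 ≤ (∑ j ∈ range L, (c j + υ)) / L := by
    apply div_nonneg ?_ (le_of_lt hLpos)
    exact Finset.sum_nonneg fun i _ => add_nonneg (hc0 i) hυ0
  have hesymm : e ≤ (L:ℝ) * ((∑ j ∈ range L, (c j + υ)) / L) ^ (L-1) :=
    (amgm_esymm (fun j => c j + υ) (fun i => add_nonneg (hc0 i) hυ0) L).2
  have hfin : e ≤ (L:ℝ) * t ^ (L-1) := by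
    calc e ≤ (L:ℝ) * ((∑ j ∈ range L, (c j + υ)) / L) ^ (L-1) := hesymm
      _ ≤ (L:ℝ) * t ^ (L-1) := by
          apply mul_le_mul_of_nonneg_left (pow_le_pow_left₀ hmean0 hmean _) (le_of_lt hLpos)
  calc ‖layerOut h W' L x - layerOut h W L x‖ ≤ B * (P - Q) := hkey
    _ ≤ B * (υ * e) := mul_le_mul_of_nonneg_left htel hB0
    _ ≤ B * (υ * ((L:ℝ) * t ^ (L-1))) :=
        mul_le_mul_of_nonneg_left (mul_le_mul_of_nonneg_left hfin hυ0) hB0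
    _ = B * L * t ^ (L-1) * υ := by ring
end

section
/- Fix Γ_1 < Γ_2 < ... < Γ_d positive reals, p > 0 and α ∈ (0,2), and let z_l(α) = Γ_l^{−1/α}. For κ ∈ (0,1), define E(α) = (Σ_{l=⌈κd⌉+1}^{d} Γ_l^{−p/α}) / (Σ_{l=1}^{d} Γ_l^{−p/α}). Then E(α) is strictly increasing in α, provided Γ_{⌈κd⌉+1} > Γ_{⌈κd⌉} (strict increase of the Γ_l). -/
open Finset

lemma aux_rpow_cross (a b s t : ℝ) (ha : 0 < a) (hab : a < b) (hts : t < s) :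
    b ^ (-s) * a ^ (-t) < b ^ (-t) * a ^ (-s) := by
  have hb : 0 < b := ha.trans hab
  have hr : 1 < b / a := (one_lt_div ha).2 hab
  have hba : a * (b / a) = b := by field_simp
  have h1 : b ^ (-s) = a ^ (-s) * (b / a) ^ (-s) := by
    rw [← Real.mul_rpow ha.le (by positivity), hba]
  have h2 : b ^ (-t) = a ^ (-t) * (b / a) ^ (-t) := by
    rw [← Real.mul_rpow ha.le (by positivity), hba]
  have hlt : (b / a) ^ (-s) < (b / a) ^ (-t) :=
    (Real.rpow_lt_rpow_left_iff hr).2 (by linarith)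
  have hpos : 0 < a ^ (-s) * a ^ (-t) := by positivity
  calc b ^ (-s) * a ^ (-t) = a ^ (-s) * a ^ (-t) * (b / a) ^ (-s) := by rw [h1]; ring
    _ < a ^ (-s) * a ^ (-t) * (b / a) ^ (-t) := by
        exact mul_lt_mul_of_pos_left hlt hpos
    _ = b ^ (-t) * a ^ (-s) := by rw [h2]; ring

theorem compression_error_strictMono_in_alpha
    (d : ℕ) (hd : 1 ≤ d) (Γ : ℕ → ℝ)
    (hΓpos : ∀ i < d, 0 < Γ i)
    (hΓmono : ∀ i j, i < j → j < d → Γ i < Γ j)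
    (p : ℝ) (hp : 0 < p) (κ : ℝ) (hκ : κ ∈ Set.Ioo (0 : ℝ) 1)
    (k : ℕ) (hk : k = ⌈κ * d⌉₊) (hkd : k < d)
    (E : ℝ → ℝ)
    (hE : ∀ α, E α = (∑ l ∈ Finset.Ico k d, Γ l ^ (-(p / α))) /
      (∑ l ∈ Finset.range d, Γ l ^ (-(p / α)))) :
    StrictMonoOn E (Set.Ioo (0 : ℝ) 2) := by
  have hk1 : 1 ≤ k := by
    rw [hk]
    have : (0 : ℝ) < κ * d := by
      have : (1 : ℝ) ≤ (d : ℝ) := by exact_mod_cast hd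
      nlinarith [hκ.1]
    exact Nat.one_le_iff_ne_zero.2 (by positivity)
  intro α hα β hβ hαβ
  obtain ⟨hα0, _⟩ := hα
  obtain ⟨hβ0, _⟩ := hβ
  set s := p / α with hs
  set t := p / β with htdef
  have hts : t < s := div_lt_div_of_pos_left hp hα0 hαβ
  -- positivity of terms
  have hterm : ∀ x : ℝ, ∀ l < d, 0 < Γ l ^ x := fun x l hl =>
    Real.rpow_pos_of_pos (hΓpos l hl) x
  have hHpos : ∀ x : ℝ, 0 < ∑ l ∈ Finset.range k, Γ l ^ x := by
    intro x
    apply Finset.sum_pos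
    · intro l hl
      exact hterm x l (lt_trans (Finset.mem_range.1 hl) hkd)
    · exact ⟨0, Finset.mem_range.2 hk1⟩
  have hTpos : ∀ x : ℝ, 0 < ∑ l ∈ Finset.Ico k d, Γ l ^ x := by
    intro x
    apply Finset.sum_pos
    · intro l hl
      exact hterm x l (Finset.mem_Ico.1 hl).2
    · exact ⟨k, Finset.mem_Ico.2 ⟨le_refl k, hkd⟩⟩
  have hsplit : ∀ x : ℝ, ∑ l ∈ Finset.range d, Γ l ^ x
      = (∑ l ∈ Finset.range k, Γ l ^ x) + ∑ l ∈ Finset.Ico k d, Γ l ^ x := by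
    intro x
    rw [Finset.range_eq_Ico, Finset.range_eq_Ico]
    exact (Finset.sum_Ico_consecutive (fun l => Γ l ^ x) (Nat.zero_le k) hkd.le).symm
  have hSpos : ∀ x : ℝ, 0 < ∑ l ∈ Finset.range d, Γ l ^ x := by
    intro x; rw [hsplit x]; exact add_pos (hHpos x) (hTpos x)
  rw [hE α, hE β, div_lt_div_iff₀ (hSpos _) (hSpos _)]
  have key : (∑ l ∈ Finset.Ico k d, Γ l ^ (-s)) * ∑ j ∈ Finset.range k, Γ j ^ (-t)
      < (∑ l ∈ Finset.Ico k d, Γ l ^ (-t)) * ∑ j ∈ Finset.range k, Γ j ^ (-s) := by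
    rw [Finset.sum_mul_sum, Finset.sum_mul_sum]
    apply Finset.sum_lt_sum_of_nonempty ⟨k, Finset.mem_Ico.2 ⟨le_refl k, hkd⟩⟩
    intro l hl
    obtain ⟨hkl, hld⟩ := Finset.mem_Ico.1 hl
    apply Finset.sum_lt_sum_of_nonempty ⟨0, Finset.mem_range.2 hk1⟩
    intro j hj
    have hjk := Finset.mem_range.1 hj
    exact aux_rpow_cross (Γ j) (Γ l) s t (hΓpos j (lt_trans hjk hkd))
      (hΓmono j l (lt_of_lt_of_le hjk hkl) hld) hts
  calc (∑ l ∈ Finset.Ico k d, Γ l ^ (-s)) * ∑ l ∈ Finset.range d, Γ l ^ (-t)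
      = (∑ l ∈ Finset.Ico k d, Γ l ^ (-s)) * ∑ j ∈ Finset.range k, Γ j ^ (-t)
        + (∑ l ∈ Finset.Ico k d, Γ l ^ (-s)) * ∑ l ∈ Finset.Ico k d, Γ l ^ (-t) := by
        rw [hsplit]; ring
    _ < (∑ l ∈ Finset.Ico k d, Γ l ^ (-t)) * ∑ j ∈ Finset.range k, Γ j ^ (-s)
        + (∑ l ∈ Finset.Ico k d, Γ l ^ (-s)) * ∑ l ∈ Finset.Ico k d, Γ l ^ (-t) :=
        add_lt_add_of_lt_of_le key le_rfl
    _ = (∑ l ∈ Finset.Ico k d, Γ l ^ (-t)) * ∑ l ∈ Finset.range d, Γ l ^ (-s) := by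
        rw [hsplit]; ring
end

section
/- For n ≥ 10 and integers 0 ≤ m ≤ n, Γ(n/2 + 1) / (Γ(m/2 + 1)·Γ((n−m)/2 + 1)) ≤ exp(⌈n/2⌉ · max(h_b(⌈m/2⌉/⌈n/2⌉), h_b(⌊m/2⌋/⌈n/2⌉))), where h_b is the binary entropy in nats. -/
open Real Finset Nat

/-- Binary entropy in nats, with the convention `h_b 0 = h_b 1 = 0`. -/
noncomputable def binEnt (x : ℝ) : ℝ := -(x * Real.log x) - (1 - x) * Real.log (1 - x)

lemma binEnt_eq (x : ℝ) : binEnt x = Real.binEntropy x := by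
  rw [binEnt, Real.binEntropy, Real.log_inv, Real.log_inv]; ring

lemma binEnt_zero : binEnt 0 = 0 := by rw [binEnt_eq]; simp
lemma binEnt_one : binEnt 1 = 0 := by rw [binEnt_eq]; simp

lemma binEnt_mono {x y : ℝ} (hx : 0 ≤ x) (hxy : x ≤ y) (hy : y ≤ 1/2) : binEnt x ≤ binEnt y := by
  rw [binEnt_eq, binEnt_eq]
  exact Real.binEntropy_strictMonoOn.monotoneOn
    (Set.mem_Icc.2 ⟨hx, by rw [show (2:ℝ)⁻¹ = 1/2 by norm_num]; linarith⟩)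
    (Set.mem_Icc.2 ⟨by linarith, by rw [show (2:ℝ)⁻¹ = 1/2 by norm_num]; linarith⟩) hxy

lemma binEnt_anti {x y : ℝ} (hx : 1/2 ≤ x) (hxy : x ≤ y) (hy : y ≤ 1) : binEnt y ≤ binEnt x := by
  rw [binEnt_eq, binEnt_eq]
  exact Real.binEntropy_strictAntiOn.antitoneOn
    (Set.mem_Icc.2 ⟨by rw [show (2:ℝ)⁻¹ = 1/2 by norm_num]; linarith, by linarith⟩)
    (Set.mem_Icc.2 ⟨by rw [show (2:ℝ)⁻¹ = 1/2 by norm_num]; linarith, hy⟩) hxy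

lemma Gamma_sq_le (x : ℝ) (hx : 0 < x) :
    Real.Gamma (x + 1/2) ^ 2 ≤ Real.Gamma x * Real.Gamma (x + 1) := by
  have h := Real.convexOn_log_Gamma.2 (Set.mem_Ioi.2 hx)
    (Set.mem_Ioi.2 (by linarith : (0:ℝ) < x + 1))
    (by norm_num : (0:ℝ) ≤ 1/2) (by norm_num : (0:ℝ) ≤ 1/2) (by norm_num)
  simp only [smul_eq_mul, Function.comp_apply] at h
  have hmid : (1/2 : ℝ) * x + (1/2) * (x+1) = x + 1/2 := by ring
  rw [hmid] at h
  have h1 : Real.log (Real.Gamma (x+1/2) ^ 2) ≤ Real.log (Real.Gamma x * Real.Gamma (x+1)) := by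
    rw [Real.log_pow, Real.log_mul (Real.Gamma_pos_of_pos hx).ne' (Real.Gamma_pos_of_pos (by linarith)).ne']
    push_cast; linarith
  have hp2 : 0 < Real.Gamma (x+1/2) ^ 2 := pow_pos (Real.Gamma_pos_of_pos (by linarith)) 2
  exact (Real.log_le_log_iff hp2 (mul_pos (Real.Gamma_pos_of_pos hx) (Real.Gamma_pos_of_pos (by linarith)))).1 h1

lemma Gamma_low (y : ℝ) (hy : 0 < y) :
    y * Real.Gamma (y + 1/2) ^ 2 ≤ Real.Gamma (y + 1) ^ 2 := by
  have h := Gamma_sq_le y hy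
  have h2 : Real.Gamma (y+1) = y * Real.Gamma y := Real.Gamma_add_one hy.ne'
  calc y * Real.Gamma (y + 1/2) ^ 2 ≤ y * (Real.Gamma y * Real.Gamma (y+1)) := by
        exact mul_le_mul_of_nonneg_left h hy.le
    _ = Real.Gamma (y+1) ^ 2 := by rw [h2]; ring

lemma Gamma_up (x : ℝ) (hx : 0 < x) :
    Real.Gamma (x + 1) ^ 2 ≤ (x + 1/2) * Real.Gamma (x + 1/2) ^ 2 := by
  have h := Gamma_sq_le (x + 1/2) (by linarith)
  have e1 : x + 1/2 + 1/2 = x + 1 := by ring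
  have e2 : Real.Gamma (x + 1/2 + 1) = (x+1/2) * Real.Gamma (x+1/2) := Real.Gamma_add_one (by positivity)
  rw [e1, e2] at h
  nlinarith [Real.Gamma_pos_of_pos (show (0:ℝ) < x + 1/2 by linarith)]

lemma Gamma_denom (t : ℝ) (ht : 1 ≤ t) :
    (t - 1/2) * (Real.Gamma t ^ 2 * Real.Gamma (t+1) ^ 2) ≤ (t + 1/2) * Real.Gamma (t + 1/2) ^ 4 := by
  have h1 := Gamma_up t (by linarith)
  have h2 := Gamma_low (t - 1/2) (by linarith)
  have e : t - 1/2 + 1/2 = t := by ring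
  have e2 : t - 1/2 + 1 = t + 1/2 := by ring
  rw [e, e2] at h2
  have hg : 0 < Real.Gamma (t + 1/2) := Real.Gamma_pos_of_pos (by linarith)
  have hg2 : 0 < Real.Gamma t := Real.Gamma_pos_of_pos (by linarith)
  calc (t - 1/2) * (Real.Gamma t ^ 2 * Real.Gamma (t+1) ^ 2)
      ≤ Real.Gamma (t+1/2)^2 * Real.Gamma (t+1)^2 := by nlinarith [sq_nonneg (Real.Gamma (t+1))]
    _ ≤ Real.Gamma (t+1/2)^2 * ((t + 1/2) * Real.Gamma (t + 1/2) ^ 2) := by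
        nlinarith [sq_nonneg (Real.Gamma (t+1/2))]
    _ = (t + 1/2) * Real.Gamma (t + 1/2) ^ 4 := by ring

lemma term_le_one (k j : ℕ) (p : ℝ) (hp : 0 ≤ p) (hp1 : p ≤ 1) :
    ((k+j).choose k : ℝ) * (p ^ k * (1-p) ^ j) ≤ 1 := by
  have hq : 0 ≤ 1 - p := by linarith
  have h1 : (1:ℝ) = ∑ i ∈ range (k+j+1), p ^ i * (1-p) ^ (k+j-i) * ((k+j).choose i : ℝ) := by
    rw [← add_pow p (1-p) (k+j)]; norm_num
  have hmem : k ∈ range (k+j+1) := by simp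
  have h2 := Finset.single_le_sum (f := fun i => p ^ i * (1-p) ^ (k+j-i) * ((k+j).choose i : ℝ))
    (fun i _ => by positivity) hmem
  rw [← h1] at h2
  simp only [Nat.add_sub_cancel_left] at h2
  calc ((k+j).choose k : ℝ) * (p ^ k * (1-p) ^ j) = p ^ k * (1-p) ^ j * ((k+j).choose k : ℝ) := by ring
    _ ≤ 1 := h2

lemma pair_le_one (k j : ℕ) (p : ℝ) (hp : 0 ≤ p) (hp1 : p ≤ 1) :
    ((k+j+1).choose k : ℝ) * (p ^ k * (1-p) ^ (j+1))
      + ((k+j+1).choose (k+1) : ℝ) * (p ^ (k+1) * (1-p) ^ j) ≤ 1 := by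
  have hq : 0 ≤ 1 - p := by linarith
  set N := k + j + 1 with hN
  have h1 : (1:ℝ) = ∑ i ∈ range (N+1), p ^ i * (1-p) ^ (N-i) * (N.choose i : ℝ) := by
    rw [← add_pow p (1-p) N]; norm_num
  have hsub : ({k, k+1} : Finset ℕ) ⊆ range (N+1) := by
    intro i hi; simp at hi; simp; omega
  have hle := Finset.sum_le_sum_of_subset_of_nonneg (f := fun i => p ^ i * (1-p) ^ (N-i) * (N.choose i : ℝ))
    hsub (fun i _ _ => by positivity)
  rw [Finset.sum_pair (by omega : k ≠ k + 1)] at hle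
  rw [← h1] at hle
  have e1 : N - k = j + 1 := by omega
  have e2 : N - (k+1) = j := by omega
  rw [e1, e2] at hle
  calc ((N).choose k : ℝ) * (p ^ k * (1-p) ^ (j+1)) + ((N).choose (k+1) : ℝ) * (p ^ (k+1) * (1-p) ^ j)
      = p ^ k * (1-p) ^ (j+1) * ((N).choose k : ℝ) + p ^ (k+1) * (1-p) ^ j * ((N).choose (k+1) : ℝ) := by ring
    _ ≤ 1 := hle

lemma exp_ent (u v t : ℕ) (hu : 0 < u) (hv : 0 < v) :
    Real.exp ((t:ℝ) * ((u:ℝ)+(v:ℝ)) * binEnt ((u:ℝ)/((u:ℝ)+(v:ℝ)))) =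
      (((u:ℝ)+(v:ℝ))/(u:ℝ))^(t*u) * (((u:ℝ)+(v:ℝ))/(v:ℝ))^(t*v) := by
  have hu' : (0:ℝ) < u := by exact_mod_cast hu
  have hv' : (0:ℝ) < v := by exact_mod_cast hv
  have hs : (0:ℝ) < (u:ℝ)+(v:ℝ) := by linarith
  have h1 : (1:ℝ) - (u:ℝ)/((u:ℝ)+(v:ℝ)) = (v:ℝ)/((u:ℝ)+(v:ℝ)) := by field_simp; ring
  rw [binEnt, h1, Real.log_div hu'.ne' hs.ne', Real.log_div hv'.ne' hs.ne']
  have harg : (t:ℝ) * ((u:ℝ)+(v:ℝ)) *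
      (-((u:ℝ)/((u:ℝ)+(v:ℝ)) * (Real.log u - Real.log ((u:ℝ)+(v:ℝ))))
        - (v:ℝ)/((u:ℝ)+(v:ℝ)) * (Real.log v - Real.log ((u:ℝ)+(v:ℝ))))
      = ((t*u : ℕ):ℝ) * Real.log (((u:ℝ)+(v:ℝ))/(u:ℝ))
        + ((t*v : ℕ):ℝ) * Real.log (((u:ℝ)+(v:ℝ))/(v:ℝ)) := by
    rw [Real.log_div hs.ne' hu'.ne', Real.log_div hs.ne' hv'.ne']
    push_cast
    field_simp
    ring
  rw [harg, Real.exp_add, Real.exp_nat_mul, Real.exp_nat_mul,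
    Real.exp_log (by positivity), Real.exp_log (by positivity)]

lemma choose_pow_le_exp (u v t : ℕ) (hu : 0 < u) (hv : 0 < v) :
    (((u+v).choose u : ℝ))^t ≤ Real.exp ((t:ℝ) * ((u:ℝ)+(v:ℝ)) * binEnt ((u:ℝ)/((u:ℝ)+(v:ℝ)))) := by
  have hu' : (0:ℝ) < u := by exact_mod_cast hu
  have hv' : (0:ℝ) < v := by exact_mod_cast hv
  have hs : (0:ℝ) < (u:ℝ)+(v:ℝ) := by linarith
  rw [exp_ent u v t hu hv]
  have hp0 : (0:ℝ) ≤ (u:ℝ)/((u:ℝ)+(v:ℝ)) := by positivity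
  have hp1 : (u:ℝ)/((u:ℝ)+(v:ℝ)) ≤ 1 := by rw [div_le_one hs]; linarith
  have h := term_le_one u v ((u:ℝ)/((u:ℝ)+(v:ℝ))) hp0 hp1
  have h1 : (1:ℝ) - (u:ℝ)/((u:ℝ)+(v:ℝ)) = (v:ℝ)/((u:ℝ)+(v:ℝ)) := by field_simp; ring
  rw [h1] at h
  have key : ((u+v).choose u : ℝ) ≤ (((u:ℝ)+(v:ℝ))/(u:ℝ))^u * (((u:ℝ)+(v:ℝ))/(v:ℝ))^v := by
    have hprod : ((u:ℝ)/((u:ℝ)+(v:ℝ)))^u * ((v:ℝ)/((u:ℝ)+(v:ℝ)))^v *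
        ((((u:ℝ)+(v:ℝ))/(u:ℝ))^u * (((u:ℝ)+(v:ℝ))/(v:ℝ))^v) = 1 := by
      rw [show ((u:ℝ)/((u:ℝ)+(v:ℝ)))^u * ((v:ℝ)/((u:ℝ)+(v:ℝ)))^v *
        ((((u:ℝ)+(v:ℝ))/(u:ℝ))^u * (((u:ℝ)+(v:ℝ))/(v:ℝ))^v)
        = (((u:ℝ)/((u:ℝ)+(v:ℝ))) * (((u:ℝ)+(v:ℝ))/(u:ℝ)))^u
          * (((v:ℝ)/((u:ℝ)+(v:ℝ))) * (((u:ℝ)+(v:ℝ))/(v:ℝ)))^v by rw [mul_pow, mul_pow]; ring]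
      have b1 : (u:ℝ)/((u:ℝ)+(v:ℝ)) * (((u:ℝ)+(v:ℝ))/(u:ℝ)) = 1 := by field_simp
      have b2 : (v:ℝ)/((u:ℝ)+(v:ℝ)) * (((u:ℝ)+(v:ℝ))/(v:ℝ)) = 1 := by field_simp
      rw [b1, b2, one_pow, one_pow, mul_one]
    calc ((u+v).choose u : ℝ)
        = ((u+v).choose u : ℝ) * (((u:ℝ)/((u:ℝ)+(v:ℝ)))^u * ((v:ℝ)/((u:ℝ)+(v:ℝ)))^v *
            ((((u:ℝ)+(v:ℝ))/(u:ℝ))^u * (((u:ℝ)+(v:ℝ))/(v:ℝ))^v)) := by rw [hprod, mul_one]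
      _ = ((u+v).choose u : ℝ) * (((u:ℝ)/((u:ℝ)+(v:ℝ)))^u * ((v:ℝ)/((u:ℝ)+(v:ℝ)))^v) *
            ((((u:ℝ)+(v:ℝ))/(u:ℝ))^u * (((u:ℝ)+(v:ℝ))/(v:ℝ))^v) := by ring
      _ ≤ 1 * ((((u:ℝ)+(v:ℝ))/(u:ℝ))^u * (((u:ℝ)+(v:ℝ))/(v:ℝ))^v) := by
            apply mul_le_mul_of_nonneg_right h (by positivity)
      _ = (((u:ℝ)+(v:ℝ))/(u:ℝ))^u * (((u:ℝ)+(v:ℝ))/(v:ℝ))^v := by ring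
  calc (((u+v).choose u : ℝ))^t ≤ ((((u:ℝ)+(v:ℝ))/(u:ℝ))^u * (((u:ℝ)+(v:ℝ))/(v:ℝ))^v)^t := by
        exact pow_le_pow_left₀ (by positivity) key t
    _ = (((u:ℝ)+(v:ℝ))/(u:ℝ))^(t*u) * (((u:ℝ)+(v:ℝ))/(v:ℝ))^(t*v) := by
        rw [mul_pow, mul_comm t u, mul_comm t v, pow_mul, pow_mul]

lemma ent_near_half (b : ℕ) (hb : 1 ≤ b) :
    Real.log 2 - binEnt ((b:ℝ)/(2*(b:ℝ)+1)) ≤ 1/(2*(b:ℝ)+1)^2 := by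
  have hb' : (1:ℝ) ≤ b := by exact_mod_cast hb
  have hA : (0:ℝ) < 2*(b:ℝ)+1 := by linarith
  set A := 2*(b:ℝ)+1 with hAdef
  have h1p : (1:ℝ) - (b:ℝ)/A = ((b:ℝ)+1)/A := by field_simp [hAdef]; ring
  rw [binEnt, h1p]
  have hp : (0:ℝ) < (b:ℝ)/A := by positivity
  have hq : (0:ℝ) < ((b:ℝ)+1)/A := by positivity
  have e1 : Real.log 2 + Real.log ((b:ℝ)/A) ≤ 2*((b:ℝ)/A) - 1 := by
    have := Real.log_le_sub_one_of_pos (show (0:ℝ) < 2*((b:ℝ)/A) by linarith)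
    rwa [Real.log_mul (by norm_num) hp.ne'] at this
  have e2 : Real.log 2 + Real.log (((b:ℝ)+1)/A) ≤ 2*(((b:ℝ)+1)/A) - 1 := by
    have := Real.log_le_sub_one_of_pos (show (0:ℝ) < 2*(((b:ℝ)+1)/A) by linarith)
    rwa [Real.log_mul (by norm_num) hq.ne'] at this
  have hsum : (b:ℝ)/A + ((b:ℝ)+1)/A = 1 := by field_simp [hAdef]; ring
  have key : 2*((b:ℝ)/A)^2 + 2*(((b:ℝ)+1)/A)^2 - 1 = 1/A^2 := by
    field_simp [hAdef]; ring
  have e3 : ((b:ℝ)/A)*Real.log 2 + (((b:ℝ)+1)/A)*Real.log 2 = Real.log 2 := by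
    have := congrArg (fun z => z * Real.log 2) hsum
    simpa [add_mul] using this
  nlinarith [mul_le_mul_of_nonneg_left e1 hp.le, mul_le_mul_of_nonneg_left e2 hq.le, e3, hsum, key]

lemma choose_eq_fact (u v : ℕ) :
    ((u+v).choose u : ℝ) = ((u+v).factorial : ℝ) / ((u.factorial : ℝ) * (v.factorial : ℝ)) := by
  have h := Nat.choose_mul_factorial_mul_factorial (Nat.le_add_right u v)
  have h2 : (u+v).choose u * u.factorial * v.factorial = (u+v).factorial := by
    simpa [Nat.add_sub_cancel_left] using h
  have h3 : (((u+v).choose u : ℝ)) * (u.factorial : ℝ) * (v.factorial : ℝ) = ((u+v).factorial : ℝ) := by exact_mod_cast h2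
  field_simp
  linarith [h3]

lemma caseEE (b c : ℕ) (hb : 0 < b) (hc : 0 < c) :
    Real.Gamma (((b:ℝ)+(c:ℝ)) + 1) / (Real.Gamma ((b:ℝ)+1) * Real.Gamma ((c:ℝ)+1)) ≤
      Real.exp (((b:ℝ)+(c:ℝ)) * binEnt ((b:ℝ)/((b:ℝ)+(c:ℝ)))) := by
  have e1 : ((b:ℝ)+(c:ℝ)) = ((b+c : ℕ) : ℝ) := by push_cast; ring
  have g1 : Real.Gamma (((b:ℝ)+(c:ℝ)) + 1) = ((b+c).factorial : ℝ) := by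
    rw [e1, Real.Gamma_nat_eq_factorial]
  have g2 : Real.Gamma ((b:ℝ)+1) = (b.factorial : ℝ) := Real.Gamma_nat_eq_factorial b
  have g3 : Real.Gamma ((c:ℝ)+1) = (c.factorial : ℝ) := Real.Gamma_nat_eq_factorial c
  rw [g1, g2, g3, ← choose_eq_fact]
  calc ((b+c).choose b : ℝ) = (((b+c).choose b : ℝ))^1 := (pow_one _).symm
    _ ≤ Real.exp (((1:ℕ):ℝ) * ((b:ℝ)+(c:ℝ)) * binEnt ((b:ℝ)/((b:ℝ)+(c:ℝ)))) := choose_pow_le_exp b c 1 hb hc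
    _ = Real.exp (((b:ℝ)+(c:ℝ)) * binEnt ((b:ℝ)/((b:ℝ)+(c:ℝ)))) := by norm_num

set_option maxHeartbeats 1000000 in
lemma caseOE (b c : ℕ) (hb : 0 < b) :
    Real.Gamma (((b:ℝ)+(c:ℝ)+1) + 1/2) / (Real.Gamma ((b:ℝ)+1) * Real.Gamma ((c:ℝ)+3/2)) ≤
      Real.exp (((b:ℝ)+(c:ℝ)+1) * binEnt ((b:ℝ)/((b:ℝ)+(c:ℝ)+1))) := by
  have hb' : (1:ℝ) ≤ b := by exact_mod_cast hb
  have hc' : (0:ℝ) ≤ c := Nat.cast_nonneg c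
  have gx : Real.Gamma ((b:ℝ)+(c:ℝ)+1) = ((b+c).factorial : ℝ) := by
    rw [show (b:ℝ)+(c:ℝ)+1 = ((b+c:ℕ):ℝ)+1 by push_cast; ring, Real.Gamma_nat_eq_factorial]
  have gx1 : Real.Gamma ((b:ℝ)+(c:ℝ)+1+1) = ((b+c+1).factorial : ℝ) := by
    rw [show (b:ℝ)+(c:ℝ)+1+1 = ((b+c+1:ℕ):ℝ)+1 by push_cast; ring, Real.Gamma_nat_eq_factorial]
  have gb : Real.Gamma ((b:ℝ)+1) = (b.factorial : ℝ) := Real.Gamma_nat_eq_factorial b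
  have gc1 : Real.Gamma ((c:ℝ)+1) = (c.factorial : ℝ) := Real.Gamma_nat_eq_factorial c
  have gc2 : Real.Gamma ((c:ℝ)+1+1) = ((c+1).factorial : ℝ) := by
    rw [show (c:ℝ)+1+1 = ((c+1:ℕ):ℝ)+1 by push_cast; ring, Real.Gamma_nat_eq_factorial]
  have hU := Gamma_sq_le ((b:ℝ)+(c:ℝ)+1) (by positivity)
  have hD := Gamma_denom ((c:ℝ)+1) (by linarith)
  rw [gx, gx1] at hU
  rw [gc1, gc2, show (c:ℝ)+1-1/2 = (c:ℝ)+1/2 by ring, show (c:ℝ)+1+1/2 = (c:ℝ)+3/2 by ring] at hD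
  have pg2 : (0:ℝ) < Real.Gamma ((c:ℝ)+3/2) := Real.Gamma_pos_of_pos (by positivity)
  have pg1 : (0:ℝ) < Real.Gamma (((b:ℝ)+(c:ℝ)+1) + 1/2) := Real.Gamma_pos_of_pos (by positivity)
  have pfb : (0:ℝ) < (b.factorial : ℝ) := by exact_mod_cast Nat.factorial_pos b
  have pfc : (0:ℝ) < (c.factorial : ℝ) := by exact_mod_cast Nat.factorial_pos c
  have pfc1 : (0:ℝ) < ((c+1).factorial : ℝ) := by exact_mod_cast Nat.factorial_pos (c+1)
  have pfx : (0:ℝ) < ((b+c).factorial : ℝ) := by exact_mod_cast Nat.factorial_pos (b+c)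
  have pfx1 : (0:ℝ) < ((b+c+1).factorial : ℝ) := by exact_mod_cast Nat.factorial_pos (b+c+1)
  have hCf : ((b+c+1).choose b : ℝ) = ((b+c+1).factorial : ℝ) / ((b.factorial : ℝ) * ((c+1).factorial : ℝ)) := by
    have := choose_eq_fact b (c+1)
    rwa [show b+(c+1) = b+c+1 from by omega] at this
  have key4 : (Real.Gamma (((b:ℝ)+(c:ℝ)+1) + 1/2) / (Real.Gamma ((b:ℝ)+1) * Real.Gamma ((c:ℝ)+3/2)))^4
      ≤ (((b+c+1).choose b : ℝ))^4 := by
    have hDen : (b.factorial:ℝ)^4 * (((c:ℝ)+1/2)/((c:ℝ)+3/2) * (((c.factorial:ℝ))^2 * (((c+1).factorial:ℝ))^2))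
        ≤ (Real.Gamma ((b:ℝ)+1) * Real.Gamma ((c:ℝ)+3/2))^4 := by
      rw [mul_pow, gb]
      apply mul_le_mul_of_nonneg_left _ (by positivity)
      rw [div_mul_eq_mul_div, div_le_iff₀ (by positivity)]
      calc ((c:ℝ)+1/2) * ((c.factorial:ℝ)^2 * ((c+1).factorial:ℝ)^2)
          ≤ ((c:ℝ)+3/2) * Real.Gamma ((c:ℝ)+3/2)^4 := hD
        _ = Real.Gamma ((c:ℝ)+3/2)^4 * ((c:ℝ)+3/2) := by ring
    have hNum : (Real.Gamma (((b:ℝ)+(c:ℝ)+1) + 1/2))^4 ≤ (((b+c).factorial:ℝ) * ((b+c+1).factorial:ℝ))^2 := by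
      calc (Real.Gamma (((b:ℝ)+(c:ℝ)+1) + 1/2))^4 = ((Real.Gamma (((b:ℝ)+(c:ℝ)+1) + 1/2))^2)^2 := by ring
        _ ≤ (((b+c).factorial:ℝ) * ((b+c+1).factorial:ℝ))^2 := by
            apply pow_le_pow_left₀ (by positivity) hU
    rw [div_pow]
    calc (Real.Gamma (((b:ℝ)+(c:ℝ)+1) + 1/2))^4 / (Real.Gamma ((b:ℝ)+1) * Real.Gamma ((c:ℝ)+3/2))^4
        ≤ (((b+c).factorial:ℝ) * ((b+c+1).factorial:ℝ))^2 /
           ((b.factorial:ℝ)^4 * (((c:ℝ)+1/2)/((c:ℝ)+3/2) * (((c.factorial:ℝ))^2 * (((c+1).factorial:ℝ))^2))) := by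
          apply div_le_div₀ (by positivity) hNum (by positivity) hDen
      _ = (((b+c+1).choose b : ℝ))^4 * ((((c:ℝ)+1)/((b:ℝ)+(c:ℝ)+1))^2 * (((c:ℝ)+3/2)/((c:ℝ)+1/2))) := by
          rw [hCf]
          have fs1 : ((b+c+1).factorial:ℝ) = ((b:ℝ)+(c:ℝ)+1) * ((b+c).factorial:ℝ) := by
            rw [show b+c+1 = (b+c)+1 from rfl, Nat.factorial_succ]; push_cast; ring
          have fs2 : ((c+1).factorial:ℝ) = ((c:ℝ)+1) * (c.factorial:ℝ) := by
            rw [Nat.factorial_succ]; push_cast; ring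
          rw [fs1, fs2]
          have hbc1 : (0:ℝ) < (b:ℝ)+(c:ℝ)+1 := by linarith
          set F := ((b+c).factorial:ℝ) with hFdef
          set B := (b.factorial:ℝ) with hBdef
          set Cc := (c.factorial:ℝ) with hCdef
          field_simp
      _ ≤ (((b+c+1).choose b : ℝ))^4 * 1 := by
          apply mul_le_mul_of_nonneg_left _ (by positivity)
          have h1 : ((c:ℝ)+2)^2 ≤ ((b:ℝ)+(c:ℝ)+1)^2 := by nlinarith
          rw [div_pow, _root_.div_mul_div_comm, div_le_one (by positivity)]
          nlinarith
      _ = (((b+c+1).choose b : ℝ))^4 := by ring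
  have hExp := choose_pow_le_exp b (c+1) 4 hb (Nat.succ_pos c)
  rw [show b+(c+1) = b+c+1 from by omega] at hExp
  apply le_of_pow_le_pow_left₀ (by norm_num : (4:ℕ) ≠ 0) (Real.exp_pos _).le
  calc _ ≤ (((b+c+1).choose b : ℝ))^4 := key4
    _ ≤ Real.exp (((4:ℕ):ℝ) * ((b:ℝ)+((c+1:ℕ):ℝ)) * binEnt ((b:ℝ)/((b:ℝ)+((c+1:ℕ):ℝ)))) := hExp
    _ = Real.exp (((b:ℝ)+(c:ℝ)+1) * binEnt ((b:ℝ)/((b:ℝ)+(c:ℝ)+1)))^4 := by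
        rw [← Real.exp_nat_mul]
        push_cast
        ring_nf

set_option maxHeartbeats 1000000 in
lemma caseOO (b c : ℕ) (hc : 0 < c) :
    Real.Gamma (((b:ℝ)+(c:ℝ)+1) + 1/2) / (Real.Gamma ((b:ℝ)+3/2) * Real.Gamma ((c:ℝ)+1)) ≤
      Real.exp (((b:ℝ)+(c:ℝ)+1) * binEnt (((b:ℝ)+1)/((b:ℝ)+(c:ℝ)+1))) := by
  have hc' : (1:ℝ) ≤ c := by exact_mod_cast hc
  have hb' : (0:ℝ) ≤ b := Nat.cast_nonneg b
  have gx : Real.Gamma ((b:ℝ)+(c:ℝ)+1) = ((b+c).factorial : ℝ) := by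
    rw [show (b:ℝ)+(c:ℝ)+1 = ((b+c:ℕ):ℝ)+1 by push_cast; ring, Real.Gamma_nat_eq_factorial]
  have gx1 : Real.Gamma ((b:ℝ)+(c:ℝ)+1+1) = ((b+c+1).factorial : ℝ) := by
    rw [show (b:ℝ)+(c:ℝ)+1+1 = ((b+c+1:ℕ):ℝ)+1 by push_cast; ring, Real.Gamma_nat_eq_factorial]
  have gc : Real.Gamma ((c:ℝ)+1) = (c.factorial : ℝ) := Real.Gamma_nat_eq_factorial c
  have gb1 : Real.Gamma ((b:ℝ)+1) = (b.factorial : ℝ) := Real.Gamma_nat_eq_factorial b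
  have gb2 : Real.Gamma ((b:ℝ)+1+1) = ((b+1).factorial : ℝ) := by
    rw [show (b:ℝ)+1+1 = ((b+1:ℕ):ℝ)+1 by push_cast; ring, Real.Gamma_nat_eq_factorial]
  have hU := Gamma_sq_le ((b:ℝ)+(c:ℝ)+1) (by positivity)
  have hD := Gamma_denom ((b:ℝ)+1) (by linarith)
  rw [gx, gx1] at hU
  rw [gb1, gb2, show (b:ℝ)+1-1/2 = (b:ℝ)+1/2 by ring, show (b:ℝ)+1+1/2 = (b:ℝ)+3/2 by ring] at hD
  have pg2 : (0:ℝ) < Real.Gamma ((b:ℝ)+3/2) := Real.Gamma_pos_of_pos (by positivity)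
  have pg1 : (0:ℝ) < Real.Gamma (((b:ℝ)+(c:ℝ)+1) + 1/2) := Real.Gamma_pos_of_pos (by positivity)
  have pfb : (0:ℝ) < (b.factorial : ℝ) := by exact_mod_cast Nat.factorial_pos b
  have pfb1 : (0:ℝ) < ((b+1).factorial : ℝ) := by exact_mod_cast Nat.factorial_pos (b+1)
  have pfc : (0:ℝ) < (c.factorial : ℝ) := by exact_mod_cast Nat.factorial_pos c
  have pfx : (0:ℝ) < ((b+c).factorial : ℝ) := by exact_mod_cast Nat.factorial_pos (b+c)
  have pfx1 : (0:ℝ) < ((b+c+1).factorial : ℝ) := by exact_mod_cast Nat.factorial_pos (b+c+1)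
  have hCf : ((b+c+1).choose (b+1) : ℝ) = ((b+c+1).factorial : ℝ) / (((b+1).factorial : ℝ) * (c.factorial : ℝ)) := by
    have := choose_eq_fact (b+1) c
    rwa [show (b+1)+c = b+c+1 from by omega] at this
  have key4 : (Real.Gamma (((b:ℝ)+(c:ℝ)+1) + 1/2) / (Real.Gamma ((b:ℝ)+3/2) * Real.Gamma ((c:ℝ)+1)))^4
      ≤ (((b+c+1).choose (b+1) : ℝ))^4 := by
    have hDen : (((b:ℝ)+1/2)/((b:ℝ)+3/2) * (((b.factorial:ℝ))^2 * (((b+1).factorial:ℝ))^2)) * (c.factorial:ℝ)^4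
        ≤ (Real.Gamma ((b:ℝ)+3/2) * Real.Gamma ((c:ℝ)+1))^4 := by
      rw [mul_pow, gc]
      apply mul_le_mul_of_nonneg_right _ (by positivity)
      rw [div_mul_eq_mul_div, div_le_iff₀ (by positivity)]
      calc ((b:ℝ)+1/2) * ((b.factorial:ℝ)^2 * ((b+1).factorial:ℝ)^2)
          ≤ ((b:ℝ)+3/2) * Real.Gamma ((b:ℝ)+3/2)^4 := hD
        _ = Real.Gamma ((b:ℝ)+3/2)^4 * ((b:ℝ)+3/2) := by ring
    have hNum : (Real.Gamma (((b:ℝ)+(c:ℝ)+1) + 1/2))^4 ≤ (((b+c).factorial:ℝ) * ((b+c+1).factorial:ℝ))^2 := by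
      calc (Real.Gamma (((b:ℝ)+(c:ℝ)+1) + 1/2))^4 = ((Real.Gamma (((b:ℝ)+(c:ℝ)+1) + 1/2))^2)^2 := by ring
        _ ≤ (((b+c).factorial:ℝ) * ((b+c+1).factorial:ℝ))^2 := by
            apply pow_le_pow_left₀ (by positivity) hU
    rw [div_pow]
    calc (Real.Gamma (((b:ℝ)+(c:ℝ)+1) + 1/2))^4 / (Real.Gamma ((b:ℝ)+3/2) * Real.Gamma ((c:ℝ)+1))^4
        ≤ (((b+c).factorial:ℝ) * ((b+c+1).factorial:ℝ))^2 /
           ((((b:ℝ)+1/2)/((b:ℝ)+3/2) * (((b.factorial:ℝ))^2 * (((b+1).factorial:ℝ))^2)) * (c.factorial:ℝ)^4) := by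
          apply div_le_div₀ (by positivity) hNum (by positivity) hDen
      _ = (((b+c+1).choose (b+1) : ℝ))^4 * ((((b:ℝ)+1)/((b:ℝ)+(c:ℝ)+1))^2 * (((b:ℝ)+3/2)/((b:ℝ)+1/2))) := by
          rw [hCf]
          have fs1 : ((b+c+1).factorial:ℝ) = ((b:ℝ)+(c:ℝ)+1) * ((b+c).factorial:ℝ) := by
            rw [show b+c+1 = (b+c)+1 from rfl, Nat.factorial_succ]; push_cast; ring
          have fs2 : ((b+1).factorial:ℝ) = ((b:ℝ)+1) * (b.factorial:ℝ) := by
            rw [Nat.factorial_succ]; push_cast; ring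
          rw [fs1, fs2]
          have hbc1 : (0:ℝ) < (b:ℝ)+(c:ℝ)+1 := by linarith
          set F := ((b+c).factorial:ℝ) with hFdef
          set B := (b.factorial:ℝ) with hBdef
          set Cc := (c.factorial:ℝ) with hCdef
          field_simp
      _ ≤ (((b+c+1).choose (b+1) : ℝ))^4 * 1 := by
          apply mul_le_mul_of_nonneg_left _ (by positivity)
          have h1 : ((b:ℝ)+2)^2 ≤ ((b:ℝ)+(c:ℝ)+1)^2 := by nlinarith
          rw [div_pow, _root_.div_mul_div_comm, div_le_one (by positivity)]
          nlinarith
      _ = (((b+c+1).choose (b+1) : ℝ))^4 := by ring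
  have hExp := choose_pow_le_exp (b+1) c 4 (Nat.succ_pos b) hc
  rw [show (b+1)+c = b+c+1 from by omega] at hExp
  apply le_of_pow_le_pow_left₀ (by norm_num : (4:ℕ) ≠ 0) (Real.exp_pos _).le
  calc _ ≤ (((b+c+1).choose (b+1) : ℝ))^4 := key4
    _ ≤ Real.exp (((4:ℕ):ℝ) * (((b+1:ℕ):ℝ)+(c:ℝ)) * binEnt (((b+1:ℕ):ℝ)/(((b+1:ℕ):ℝ)+(c:ℝ)))) := hExp
    _ = Real.exp (((b:ℝ)+(c:ℝ)+1) * binEnt (((b:ℝ)+1)/((b:ℝ)+(c:ℝ)+1)))^4 := by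
        rw [← Real.exp_nat_mul]
        push_cast
        ring_nf

lemma pair_prod_bound (b d : ℕ) (p : ℝ) (hp0 : 0 < p) (hp1 : p < 1) :
    ((b+d+1).choose b : ℝ) * ((b+d+1).choose (b+1) : ℝ) * (p^(2*b+1) * (1-p)^(2*d+1)) ≤ 1/4 := by
  have h := pair_le_one b d p hp0.le hp1.le
  set X := ((b+d+1).choose b : ℝ) * (p ^ b * (1-p) ^ (d+1)) with hX
  set Y := ((b+d+1).choose (b+1) : ℝ) * (p ^ (b+1) * (1-p) ^ d) with hY
  have h1p : (0:ℝ) ≤ 1 - p := by linarith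
  have hXpos : 0 ≤ X := by
    rw [hX]; exact mul_nonneg (Nat.cast_nonneg _) (mul_nonneg (pow_nonneg hp0.le _) (pow_nonneg h1p _))
  have hYpos : 0 ≤ Y := by
    rw [hY]; exact mul_nonneg (Nat.cast_nonneg _) (mul_nonneg (pow_nonneg hp0.le _) (pow_nonneg h1p _))
  have hXY : X * Y ≤ 1/4 := by nlinarith [sq_nonneg (X - Y)]
  calc ((b+d+1).choose b : ℝ) * ((b+d+1).choose (b+1) : ℝ) * (p^(2*b+1) * (1-p)^(2*d+1))
      = X * Y := by rw [hX, hY]; ring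
    _ ≤ 1/4 := hXY

lemma mono_chain (b d : ℕ) :
    ((b+d+1).choose b : ℝ)^2 * ((b+d+1).choose (b+1) : ℝ)^2 *
      ((((b:ℝ)+3/2)*((d:ℝ)+3/2))/(((b:ℝ)+1/2)*((d:ℝ)+1/2)))
      ≤ Real.exp (((2:ℕ):ℝ) * (((2*b+1:ℕ):ℝ)+((2*d+1:ℕ):ℝ)) *
          binEnt (((2*b+1:ℕ):ℝ)/(((2*b+1:ℕ):ℝ)+((2*d+1:ℕ):ℝ)))) := by
  have hu : 0 < 2*b+1 := by omega
  have hv : 0 < 2*d+1 := by omega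
  have hu' : (0:ℝ) < ((2*b+1:ℕ):ℝ) := by exact_mod_cast hu
  have hv' : (0:ℝ) < ((2*d+1:ℕ):ℝ) := by exact_mod_cast hv
  have hs : (0:ℝ) < ((2*b+1:ℕ):ℝ) + ((2*d+1:ℕ):ℝ) := by linarith
  set p : ℝ := ((2*b+1:ℕ):ℝ)/(((2*b+1:ℕ):ℝ)+((2*d+1:ℕ):ℝ)) with hpdef
  have hp0 : 0 < p := by positivity
  have hp1 : p < 1 := by rw [hpdef, div_lt_one hs]; linarith
  have hq : 1 - p = ((2*d+1:ℕ):ℝ)/(((2*b+1:ℕ):ℝ)+((2*d+1:ℕ):ℝ)) := by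
    rw [hpdef]; field_simp; ring
  have hq0 : 0 < 1 - p := by rw [hq]; positivity
  have hP : 0 < p^(2*b+1) * (1-p)^(2*d+1) := by positivity
  have hCC := pair_prod_bound b d p hp0 hp1
  have hCC' : ((b+d+1).choose b : ℝ) * ((b+d+1).choose (b+1) : ℝ)
      ≤ (1/4) / (p^(2*b+1) * (1-p)^(2*d+1)) := by
    rw [le_div_iff₀ hP]; exact hCC
  have hsq : (((b+d+1).choose b : ℝ) * ((b+d+1).choose (b+1) : ℝ))^2
      ≤ (1/16) / (p^(2*b+1) * (1-p)^(2*d+1))^2 := by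
    calc (((b+d+1).choose b : ℝ) * ((b+d+1).choose (b+1) : ℝ))^2
        ≤ ((1/4) / (p^(2*b+1) * (1-p)^(2*d+1)))^2 := by
          apply pow_le_pow_left₀ (by positivity) hCC'
      _ = (1/16) / (p^(2*b+1) * (1-p)^(2*d+1))^2 := by rw [div_pow]; norm_num
  have hcorr : (((b:ℝ)+3/2)*((d:ℝ)+3/2))/(((b:ℝ)+1/2)*((d:ℝ)+1/2)) ≤ 16 := by
    rw [div_le_iff₀ (by positivity)]
    have hb0 : (0:ℝ) ≤ b := Nat.cast_nonneg b
    have hd0 : (0:ℝ) ≤ d := Nat.cast_nonneg d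
    nlinarith [mul_nonneg hb0 hd0]
  rw [exp_ent _ _ 2 hu hv]
  have hrecip : (1:ℝ) / (p^(2*b+1) * (1-p)^(2*d+1))^2
      = ((((2*b+1:ℕ):ℝ)+((2*d+1:ℕ):ℝ))/((2*b+1:ℕ):ℝ))^(2*(2*b+1)) *
        ((((2*b+1:ℕ):ℝ)+((2*d+1:ℕ):ℝ))/((2*d+1:ℕ):ℝ))^(2*(2*d+1)) := by
    rw [hq, hpdef]
    rw [mul_pow, ← pow_mul, ← pow_mul, div_pow, div_pow, div_pow, div_pow, mul_comm (2*b+1) 2, mul_comm (2*d+1) 2]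
    field_simp
  calc ((b+d+1).choose b : ℝ)^2 * ((b+d+1).choose (b+1) : ℝ)^2 *
      ((((b:ℝ)+3/2)*((d:ℝ)+3/2))/(((b:ℝ)+1/2)*((d:ℝ)+1/2)))
      = (((b+d+1).choose b : ℝ) * ((b+d+1).choose (b+1) : ℝ))^2 *
        ((((b:ℝ)+3/2)*((d:ℝ)+3/2))/(((b:ℝ)+1/2)*((d:ℝ)+1/2))) := by ring
    _ ≤ ((1/16) / (p^(2*b+1) * (1-p)^(2*d+1))^2) * 16 := by
        apply mul_le_mul hsq hcorr (by positivity) (by positivity)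
    _ = 1 / (p^(2*b+1) * (1-p)^(2*d+1))^2 := by ring
    _ = _ := hrecip

lemma straddle_chain (b : ℕ) (hb : 1 ≤ b) :
    ((b+b+1).choose b : ℝ)^2 * ((b+b+1).choose (b+1) : ℝ)^2 *
      ((((b:ℝ)+3/2)*((b:ℝ)+3/2))/(((b:ℝ)+1/2)*((b:ℝ)+1/2)))
      ≤ Real.exp (4 * ((b:ℝ)+(b:ℝ)+1) * binEnt ((b:ℝ)/((b:ℝ)+(b:ℝ)+1))) := by
  have hb' : (1:ℝ) ≤ b := by exact_mod_cast hb
  set A : ℝ := 2*(b:ℝ)+1 with hAdef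
  have hA3 : (3:ℝ) ≤ A := by rw [hAdef]; linarith
  have hA0 : (0:ℝ) < A := by linarith
  have e1 : (b:ℝ)+(b:ℝ)+1 = A := by rw [hAdef]; ring
  rw [e1]
  -- bound on the product of the two binomials
  have hCC := pair_prod_bound b b (1/2) (by norm_num) (by norm_num)
  rw [show (1:ℝ) - 1/2 = 1/2 by norm_num, ← pow_add] at hCC
  have hpow : ((1:ℝ)/2)^(2*b+1+(2*b+1)) = 1/2^(4*b+2) := by
    rw [div_pow, one_pow]; norm_num; ring_nf
  rw [hpow] at hCC
  have h2pos : (0:ℝ) < 2^(4*b+2) := by positivity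
  have hCC' : ((b+b+1).choose b : ℝ) * ((b+b+1).choose (b+1) : ℝ) ≤ 2^(4*b+2)/4 := by
    have := mul_le_mul_of_nonneg_right hCC h2pos.le
    rw [show b+b+1 = 2*b+1 from by omega]
    calc ((2*b+1).choose b : ℝ) * ((2*b+1).choose (b+1) : ℝ)
        = ((b+b+1).choose b : ℝ) * ((b+b+1).choose (b+1) : ℝ) * (1/2^(4*b+2)) * 2^(4*b+2) := by
          rw [show b+b+1 = 2*b+1 from by omega]; field_simp
      _ ≤ 1/4 * 2^(4*b+2) := this
      _ = 2^(4*b+2)/4 := by ring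
  have hsq : (((b+b+1).choose b : ℝ) * ((b+b+1).choose (b+1) : ℝ))^2 ≤ (2^(4*b+2))^2/16 := by
    calc (((b+b+1).choose b : ℝ) * ((b+b+1).choose (b+1) : ℝ))^2 ≤ (2^(4*b+2)/4)^2 := by
          apply pow_le_pow_left₀ (by positivity) hCC'
      _ = (2^(4*b+2))^2/16 := by rw [div_pow]; norm_num
  set corr : ℝ := (((b:ℝ)+3/2)*((b:ℝ)+3/2))/(((b:ℝ)+1/2)*((b:ℝ)+1/2)) with hcorrdef
  have hcorrpos : 0 < corr := by rw [hcorrdef]; positivity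
  have step1 : ((b+b+1).choose b : ℝ)^2 * ((b+b+1).choose (b+1) : ℝ)^2 * corr
      ≤ (2^(4*b+2))^2/16 * corr := by
    apply mul_le_mul_of_nonneg_right _ hcorrpos.le
    calc ((b+b+1).choose b : ℝ)^2 * ((b+b+1).choose (b+1) : ℝ)^2
        = (((b+b+1).choose b : ℝ) * ((b+b+1).choose (b+1) : ℝ))^2 := by ring
      _ ≤ (2^(4*b+2))^2/16 := hsq
  refine le_trans step1 ?_
  -- now pure analytic bound
  have hLpos : (0:ℝ) < (2^(4*b+2))^2/16 * corr := by positivity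
  rw [← Real.exp_log hLpos]
  apply Real.exp_le_exp.mpr
  -- compute the log of LHS
  have hlog1 : Real.log ((2^(4*b+2))^2/16 * corr)
      = ((8*b+4:ℕ):ℝ) * Real.log 2 + Real.log corr - Real.log 16 := by
    rw [Real.log_mul (by positivity) hcorrpos.ne', Real.log_div (by positivity) (by norm_num)]
    rw [← pow_mul, Real.log_pow]
    push_cast; ring_nf
  rw [hlog1]
  have hlog16 : Real.log 16 = 4 * Real.log 2 := by
    rw [show (16:ℝ) = 2^4 by norm_num, Real.log_pow]; push_cast; ring
  have hlogcorr : Real.log corr ≤ 4/A := by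
    have hC0 : (0:ℝ) < ((b:ℝ)+3/2)/((b:ℝ)+1/2) := by positivity
    have h1 : Real.log (((b:ℝ)+3/2)/((b:ℝ)+1/2)) ≤ ((b:ℝ)+3/2)/((b:ℝ)+1/2) - 1 :=
      Real.log_le_sub_one_of_pos hC0
    have h2 : ((b:ℝ)+3/2)/((b:ℝ)+1/2) - 1 = 2/A := by
      rw [hAdef]; field_simp; ring
    have h3 : Real.log corr = 2 * Real.log (((b:ℝ)+3/2)/((b:ℝ)+1/2)) := by
      rw [hcorrdef, show (((b:ℝ)+3/2)*((b:ℝ)+3/2))/(((b:ℝ)+1/2)*((b:ℝ)+1/2))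
        = (((b:ℝ)+3/2)/((b:ℝ)+1/2))^2 by rw [div_pow]; ring, Real.log_pow]
      push_cast; ring
    rw [h3]; rw [h2] at h1
    have := mul_le_mul_of_nonneg_left h1 (by norm_num : (0:ℝ) ≤ 2)
    calc 2 * Real.log (((b:ℝ)+3/2)/((b:ℝ)+1/2)) ≤ 2 * (2/A) := this
      _ = 4/A := by ring
  have hent := ent_near_half b hb
  have hentA : Real.log 2 - binEnt ((b:ℝ)/A) ≤ 1/A^2 := by rw [hAdef]; exact hent
  have hmul : 4*A*(Real.log 2 - 1/A^2) ≤ 4*A*binEnt ((b:ℝ)/A) := by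
    apply mul_le_mul_of_nonneg_left _ (by linarith)
    linarith
  have hexpand : 4*A*(Real.log 2 - 1/A^2) = 4*A*Real.log 2 - 4/A := by
    field_simp
  have h8A : 8/A ≤ 4 * Real.log 2 := by
    have l2 : (0.6931471803:ℝ) < Real.log 2 := Real.log_two_gt_d9
    have : 8/A ≤ 8/3 := by
      apply div_le_div_of_nonneg_left (by norm_num) (by norm_num) hA3
    linarith
  have hcast : ((8*b+4:ℕ):ℝ) = 4*A - 4 + 4 := by rw [hAdef]; push_cast; ring
  have hmul2 : 4*A*Real.log 2 - 4/A ≤ 4*A*binEnt ((b:ℝ)/A) := by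
    calc 4*A*Real.log 2 - 4/A = 4*A*(Real.log 2 - 1/A^2) := by field_simp
      _ ≤ 4*A*binEnt ((b:ℝ)/A) := hmul
  rw [hcast, hlog16]
  clear_value A
  set L := Real.log 2 with hL
  set E := binEnt ((b:ℝ)/A) with hE
  set cc := Real.log corr with hcc
  clear_value L E cc
  ring_nf
  ring_nf at hmul2 hlogcorr h8A
  linarith

set_option maxHeartbeats 1600000 in
lemma caseEO (b d : ℕ) (h3 : 2 ≤ b + d) :
    Real.Gamma (((b:ℝ)+(d:ℝ)+1) + 1) / (Real.Gamma ((b:ℝ)+3/2) * Real.Gamma ((d:ℝ)+3/2)) ≤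
      Real.exp (((b:ℝ)+(d:ℝ)+1) *
        max (binEnt (((b:ℝ)+1)/((b:ℝ)+(d:ℝ)+1))) (binEnt ((b:ℝ)/((b:ℝ)+(d:ℝ)+1)))) := by
  have hb0 : (0:ℝ) ≤ b := Nat.cast_nonneg b
  have hd0 : (0:ℝ) ≤ d := Nat.cast_nonneg d
  have hN0 : (0:ℝ) < (b:ℝ)+(d:ℝ)+1 := by linarith
  -- Gamma values
  have gnum : Real.Gamma (((b:ℝ)+(d:ℝ)+1) + 1) = ((b+d+1).factorial : ℝ) := by
    rw [show ((b:ℝ)+(d:ℝ)+1) + 1 = ((b+d+1:ℕ):ℝ)+1 by push_cast; ring, Real.Gamma_nat_eq_factorial]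
  have gb1 : Real.Gamma ((b:ℝ)+1) = (b.factorial : ℝ) := Real.Gamma_nat_eq_factorial b
  have gb2 : Real.Gamma ((b:ℝ)+1+1) = ((b+1).factorial : ℝ) := by
    rw [show (b:ℝ)+1+1 = ((b+1:ℕ):ℝ)+1 by push_cast; ring, Real.Gamma_nat_eq_factorial]
  have gd1 : Real.Gamma ((d:ℝ)+1) = (d.factorial : ℝ) := Real.Gamma_nat_eq_factorial d
  have gd2 : Real.Gamma ((d:ℝ)+1+1) = ((d+1).factorial : ℝ) := by
    rw [show (d:ℝ)+1+1 = ((d+1:ℕ):ℝ)+1 by push_cast; ring, Real.Gamma_nat_eq_factorial]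
  have hD1 := Gamma_denom ((b:ℝ)+1) (by linarith)
  have hD2 := Gamma_denom ((d:ℝ)+1) (by linarith)
  rw [gb1, gb2, show (b:ℝ)+1-1/2 = (b:ℝ)+1/2 by ring, show (b:ℝ)+1+1/2 = (b:ℝ)+3/2 by ring] at hD1
  rw [gd1, gd2, show (d:ℝ)+1-1/2 = (d:ℝ)+1/2 by ring, show (d:ℝ)+1+1/2 = (d:ℝ)+3/2 by ring] at hD2
  have pgb : (0:ℝ) < Real.Gamma ((b:ℝ)+3/2) := Real.Gamma_pos_of_pos (by positivity)
  have pgd : (0:ℝ) < Real.Gamma ((d:ℝ)+3/2) := Real.Gamma_pos_of_pos (by positivity)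
  have pfb : (0:ℝ) < (b.factorial : ℝ) := by exact_mod_cast Nat.factorial_pos b
  have pfb1 : (0:ℝ) < ((b+1).factorial : ℝ) := by exact_mod_cast Nat.factorial_pos (b+1)
  have pfd : (0:ℝ) < (d.factorial : ℝ) := by exact_mod_cast Nat.factorial_pos d
  have pfd1 : (0:ℝ) < ((d+1).factorial : ℝ) := by exact_mod_cast Nat.factorial_pos (d+1)
  have pfn : (0:ℝ) < ((b+d+1).factorial : ℝ) := by exact_mod_cast Nat.factorial_pos (b+d+1)
  have hCa : ((b+d+1).choose b : ℝ) = ((b+d+1).factorial : ℝ) / ((b.factorial : ℝ) * ((d+1).factorial : ℝ)) := by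
    have := choose_eq_fact b (d+1); rwa [show b+(d+1) = b+d+1 from by omega] at this
  have hCb : ((b+d+1).choose (b+1) : ℝ) = ((b+d+1).factorial : ℝ) / (((b+1).factorial : ℝ) * (d.factorial : ℝ)) := by
    have := choose_eq_fact (b+1) d; rwa [show (b+1)+d = b+d+1 from by omega] at this
  -- key 4th-power bound
  have key4 : (Real.Gamma (((b:ℝ)+(d:ℝ)+1) + 1) / (Real.Gamma ((b:ℝ)+3/2) * Real.Gamma ((d:ℝ)+3/2)))^4
      ≤ ((b+d+1).choose b : ℝ)^2 * ((b+d+1).choose (b+1) : ℝ)^2 *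
        ((((b:ℝ)+3/2)*((d:ℝ)+3/2))/(((b:ℝ)+1/2)*((d:ℝ)+1/2))) := by
    have hDenb : (((b:ℝ)+1/2)/((b:ℝ)+3/2)) * ((b.factorial:ℝ)^2 * ((b+1).factorial:ℝ)^2)
        ≤ Real.Gamma ((b:ℝ)+3/2)^4 := by
      rw [div_mul_eq_mul_div, div_le_iff₀ (by positivity)]
      calc ((b:ℝ)+1/2) * ((b.factorial:ℝ)^2 * ((b+1).factorial:ℝ)^2)
          ≤ ((b:ℝ)+3/2) * Real.Gamma ((b:ℝ)+3/2)^4 := hD1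
        _ = Real.Gamma ((b:ℝ)+3/2)^4 * ((b:ℝ)+3/2) := by ring
    have hDend : (((d:ℝ)+1/2)/((d:ℝ)+3/2)) * ((d.factorial:ℝ)^2 * ((d+1).factorial:ℝ)^2)
        ≤ Real.Gamma ((d:ℝ)+3/2)^4 := by
      rw [div_mul_eq_mul_div, div_le_iff₀ (by positivity)]
      calc ((d:ℝ)+1/2) * ((d.factorial:ℝ)^2 * ((d+1).factorial:ℝ)^2)
          ≤ ((d:ℝ)+3/2) * Real.Gamma ((d:ℝ)+3/2)^4 := hD2
        _ = Real.Gamma ((d:ℝ)+3/2)^4 * ((d:ℝ)+3/2) := by ring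
    have hDen : ((((b:ℝ)+1/2)/((b:ℝ)+3/2)) * ((b.factorial:ℝ)^2 * ((b+1).factorial:ℝ)^2)) *
        ((((d:ℝ)+1/2)/((d:ℝ)+3/2)) * ((d.factorial:ℝ)^2 * ((d+1).factorial:ℝ)^2))
        ≤ (Real.Gamma ((b:ℝ)+3/2) * Real.Gamma ((d:ℝ)+3/2))^4 := by
      rw [mul_pow]
      exact mul_le_mul hDenb hDend (by positivity) (by positivity)
    rw [div_pow, gnum]
    calc (((b+d+1).factorial : ℝ))^4 / (Real.Gamma ((b:ℝ)+3/2) * Real.Gamma ((d:ℝ)+3/2))^4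
        ≤ (((b+d+1).factorial : ℝ))^4 /
          (((((b:ℝ)+1/2)/((b:ℝ)+3/2)) * ((b.factorial:ℝ)^2 * ((b+1).factorial:ℝ)^2)) *
           ((((d:ℝ)+1/2)/((d:ℝ)+3/2)) * ((d.factorial:ℝ)^2 * ((d+1).factorial:ℝ)^2))) := by
          apply div_le_div₀ (by positivity) le_rfl (by positivity) hDen
      _ = ((b+d+1).choose b : ℝ)^2 * ((b+d+1).choose (b+1) : ℝ)^2 *
          ((((b:ℝ)+3/2)*((d:ℝ)+3/2))/(((b:ℝ)+1/2)*((d:ℝ)+1/2))) := by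
          rw [hCa, hCb]
          have fsb : ((b+1).factorial:ℝ) = ((b:ℝ)+1) * (b.factorial:ℝ) := by
            rw [Nat.factorial_succ]; push_cast; ring
          have fsd : ((d+1).factorial:ℝ) = ((d:ℝ)+1) * (d.factorial:ℝ) := by
            rw [Nat.factorial_succ]; push_cast; ring
          rw [fsb, fsd]
          set F := ((b+d+1).factorial:ℝ) with hF
          set B := (b.factorial:ℝ) with hB
          set D := (d.factorial:ℝ) with hD
          field_simp
  -- entropy-side bound
  have main : ((b+d+1).choose b : ℝ)^2 * ((b+d+1).choose (b+1) : ℝ)^2 *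
        ((((b:ℝ)+3/2)*((d:ℝ)+3/2))/(((b:ℝ)+1/2)*((d:ℝ)+1/2)))
      ≤ Real.exp (4 * (((b:ℝ)+(d:ℝ)+1) *
          max (binEnt (((b:ℝ)+1)/((b:ℝ)+(d:ℝ)+1))) (binEnt ((b:ℝ)/((b:ℝ)+(d:ℝ)+1))))) := by
    rcases Nat.lt_trichotomy d b with hdb | hdb | hdb
    · -- d < b : entropy decreasing side, use binEnt (b/N)
      have hd1b : (d:ℝ) + 1 ≤ (b:ℝ) := by exact_mod_cast Nat.succ_le_of_lt hdb
      refine le_trans (mono_chain b d) ?_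
      rw [Real.exp_le_exp]
      have harg : ((2:ℕ):ℝ) * (((2*b+1:ℕ):ℝ)+((2*d+1:ℕ):ℝ)) = 4 * ((b:ℝ)+(d:ℝ)+1) := by
        push_cast; ring
      have hple : binEnt (((2*b+1:ℕ):ℝ)/(((2*b+1:ℕ):ℝ)+((2*d+1:ℕ):ℝ)))
          ≤ max (binEnt (((b:ℝ)+1)/((b:ℝ)+(d:ℝ)+1))) (binEnt ((b:ℝ)/((b:ℝ)+(d:ℝ)+1))) := by
        refine le_trans ?_ (le_max_right _ _)
        apply binEnt_anti
        · rw [le_div_iff₀ hN0]; linarith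
        · rw [div_le_div_iff₀ hN0 (by push_cast; linarith)]
          push_cast; nlinarith
        · rw [div_le_one (by push_cast; linarith)]; push_cast; linarith
      calc ((2:ℕ):ℝ) * (((2*b+1:ℕ):ℝ)+((2*d+1:ℕ):ℝ)) *
            binEnt (((2*b+1:ℕ):ℝ)/(((2*b+1:ℕ):ℝ)+((2*d+1:ℕ):ℝ)))
          = (4 * ((b:ℝ)+(d:ℝ)+1)) * binEnt (((2*b+1:ℕ):ℝ)/(((2*b+1:ℕ):ℝ)+((2*d+1:ℕ):ℝ))) := by
            rw [harg]
        _ ≤ (4 * ((b:ℝ)+(d:ℝ)+1)) * max (binEnt (((b:ℝ)+1)/((b:ℝ)+(d:ℝ)+1))) (binEnt ((b:ℝ)/((b:ℝ)+(d:ℝ)+1))) := by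
            apply mul_le_mul_of_nonneg_left hple (by linarith)
        _ = 4 * (((b:ℝ)+(d:ℝ)+1) * max (binEnt (((b:ℝ)+1)/((b:ℝ)+(d:ℝ)+1))) (binEnt ((b:ℝ)/((b:ℝ)+(d:ℝ)+1)))) := by
            ring
    · -- d = b : straddle
      subst hdb
      have hb1 : 1 ≤ d := by omega
      refine le_trans (straddle_chain d hb1) ?_
      rw [Real.exp_le_exp]
      have hple : binEnt ((d:ℝ)/((d:ℝ)+(d:ℝ)+1))
          ≤ max (binEnt (((d:ℝ)+1)/((d:ℝ)+(d:ℝ)+1))) (binEnt ((d:ℝ)/((d:ℝ)+(d:ℝ)+1))) := le_max_right _ _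
      calc 4 * ((d:ℝ)+(d:ℝ)+1) * binEnt ((d:ℝ)/((d:ℝ)+(d:ℝ)+1))
          ≤ 4 * ((d:ℝ)+(d:ℝ)+1) * max (binEnt (((d:ℝ)+1)/((d:ℝ)+(d:ℝ)+1))) (binEnt ((d:ℝ)/((d:ℝ)+(d:ℝ)+1))) := by
            apply mul_le_mul_of_nonneg_left hple (by linarith)
        _ = 4 * (((d:ℝ)+(d:ℝ)+1) * max (binEnt (((d:ℝ)+1)/((d:ℝ)+(d:ℝ)+1))) (binEnt ((d:ℝ)/((d:ℝ)+(d:ℝ)+1)))) := by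
            ring
    · -- b < d : entropy increasing side, use binEnt ((b+1)/N)
      have hb1d : (b:ℝ) + 1 ≤ (d:ℝ) := by exact_mod_cast Nat.succ_le_of_lt hdb
      refine le_trans (mono_chain b d) ?_
      rw [Real.exp_le_exp]
      have harg : ((2:ℕ):ℝ) * (((2*b+1:ℕ):ℝ)+((2*d+1:ℕ):ℝ)) = 4 * ((b:ℝ)+(d:ℝ)+1) := by
        push_cast; ring
      have hple : binEnt (((2*b+1:ℕ):ℝ)/(((2*b+1:ℕ):ℝ)+((2*d+1:ℕ):ℝ)))
          ≤ max (binEnt (((b:ℝ)+1)/((b:ℝ)+(d:ℝ)+1))) (binEnt ((b:ℝ)/((b:ℝ)+(d:ℝ)+1))) := by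
        refine le_trans ?_ (le_max_left _ _)
        apply binEnt_mono
        · positivity
        · rw [div_le_div_iff₀ (by push_cast; linarith) hN0]
          push_cast; nlinarith
        · rw [div_le_iff₀ hN0]; linarith
      calc ((2:ℕ):ℝ) * (((2*b+1:ℕ):ℝ)+((2*d+1:ℕ):ℝ)) *
            binEnt (((2*b+1:ℕ):ℝ)/(((2*b+1:ℕ):ℝ)+((2*d+1:ℕ):ℝ)))
          = (4 * ((b:ℝ)+(d:ℝ)+1)) * binEnt (((2*b+1:ℕ):ℝ)/(((2*b+1:ℕ):ℝ)+((2*d+1:ℕ):ℝ))) := by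
            rw [harg]
        _ ≤ (4 * ((b:ℝ)+(d:ℝ)+1)) * max (binEnt (((b:ℝ)+1)/((b:ℝ)+(d:ℝ)+1))) (binEnt ((b:ℝ)/((b:ℝ)+(d:ℝ)+1))) := by
            apply mul_le_mul_of_nonneg_left hple (by linarith)
        _ = 4 * (((b:ℝ)+(d:ℝ)+1) * max (binEnt (((b:ℝ)+1)/((b:ℝ)+(d:ℝ)+1))) (binEnt ((b:ℝ)/((b:ℝ)+(d:ℝ)+1)))) := by
            ring
  -- conclude
  apply le_of_pow_le_pow_left₀ (by norm_num : (4:ℕ) ≠ 0) (Real.exp_pos _).le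
  calc _ ≤ _ := key4
    _ ≤ Real.exp (4 * (((b:ℝ)+(d:ℝ)+1) *
          max (binEnt (((b:ℝ)+1)/((b:ℝ)+(d:ℝ)+1))) (binEnt ((b:ℝ)/((b:ℝ)+(d:ℝ)+1))))) := main
    _ = Real.exp (((b:ℝ)+(d:ℝ)+1) *
          max (binEnt (((b:ℝ)+1)/((b:ℝ)+(d:ℝ)+1))) (binEnt ((b:ℝ)/((b:ℝ)+(d:ℝ)+1))))^4 := by
        rw [← Real.exp_nat_mul]; norm_num

lemma ceil_half_nat (b : ℕ) : ⌈(b:ℝ)+1/2⌉ = (b:ℤ)+1 := by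
  rw [Int.ceil_eq_iff]
  constructor
  · push_cast; linarith
  · push_cast; linarith

lemma floor_half_nat (b : ℕ) : ⌊(b:ℝ)+1/2⌋ = (b:ℤ) := by
  rw [Int.floor_eq_iff]
  constructor
  · push_cast; linarith
  · push_cast; linarith

theorem Gamma_ratio_entropy_bound (n m : ℕ) (hn : 10 ≤ n) (hmn : m ≤ n) :
    Real.Gamma ((n : ℝ) / 2 + 1) /
      (Real.Gamma ((m : ℝ) / 2 + 1) * Real.Gamma (((n : ℝ) - m) / 2 + 1)) ≤
    Real.exp ((⌈(n : ℝ) / 2⌉ : ℝ) *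
      max (binEnt ((⌈(m : ℝ) / 2⌉ : ℝ) / (⌈(n : ℝ) / 2⌉ : ℝ)))
          (binEnt ((⌊(m : ℝ) / 2⌋ : ℝ) / (⌈(n : ℝ) / 2⌉ : ℝ)))) := by
  have hΓn : 0 < Real.Gamma ((n:ℝ)/2 + 1) := Real.Gamma_pos_of_pos (by positivity)
  by_cases hm0 : m = 0
  · subst hm0
    have e1 : ((0:ℕ):ℝ)/2 + 1 = 1 := by norm_num
    have e2 : (((n:ℝ) - ((0:ℕ):ℝ))/2 + 1) = (n:ℝ)/2 + 1 := by norm_num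
    rw [e1, e2, Real.Gamma_one, one_mul, div_self hΓn.ne']
    have e3 : (((0:ℕ):ℝ))/2 = ((0:ℕ):ℝ) := by norm_num
    rw [e3, Int.ceil_natCast, Int.floor_natCast]
    push_cast
    rw [zero_div, binEnt_zero, max_self, mul_zero, Real.exp_zero]
  · by_cases hmn' : m = n
    · subst hmn'
      have e2 : (((m:ℝ) - (m:ℝ))/2 + 1) = 1 := by norm_num
      rw [e2, Real.Gamma_one, mul_one, div_self hΓn.ne']
      have hceil0 : (0:ℝ) ≤ (⌈(m:ℝ)/2⌉:ℝ) := by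
        have : (0:ℤ) ≤ ⌈(m:ℝ)/2⌉ := Int.ceil_nonneg (by positivity)
        exact_mod_cast this
      have hceilne : (⌈(m:ℝ)/2⌉:ℝ) ≠ 0 := by
        have : (1:ℤ) ≤ ⌈(m:ℝ)/2⌉ := by
          apply Int.le_ceil_iff.mpr
          have : (1:ℝ) ≤ (m:ℝ) := by
            have : 1 ≤ m := Nat.one_le_iff_ne_zero.2 hm0
            exact_mod_cast this
          push_cast
          linarith
        intro h
        rw [show ((0:ℝ)) = ((0:ℤ):ℝ) by norm_num] at h
        have := Int.cast_injective h
        omega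
      rw [div_self hceilne, binEnt_one]
      apply Real.one_le_exp
      apply mul_nonneg hceil0
      exact le_trans (le_refl 0) (le_max_of_le_left (le_refl 0))
    · -- main cases
      have hm1 : 1 ≤ m := Nat.one_le_iff_ne_zero.2 hm0
      have hmlt : m < n := lt_of_le_of_ne hmn hmn'
      rcases Nat.even_or_odd n with ⟨a, hna⟩ | ⟨a, hna⟩
      · -- n even
        rcases Nat.even_or_odd m with ⟨b, hmb⟩ | ⟨b, hmb⟩
        · -- m even : caseEE with c = a - b
          obtain ⟨c, hc⟩ : ∃ c, a = b + c := ⟨a - b, by omega⟩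
          have hb1 : 0 < b := by omega
          have hc1 : 0 < c := by omega
          subst hna hmb hc
          have en : ((b+c+(b+c):ℕ):ℝ)/2 = ((b+c:ℕ):ℝ) := by push_cast; ring
          have em : ((b+b:ℕ):ℝ)/2 = ((b:ℕ):ℝ) := by push_cast; ring
          have enm : (((b+c+(b+c):ℕ):ℝ) - ((b+b:ℕ):ℝ))/2 = ((c:ℕ):ℝ) := by push_cast; ring
          rw [en, em, enm, Int.ceil_natCast, Int.floor_natCast, Int.ceil_natCast, max_self]
          have := caseEE b c hb1 hc1
          push_cast
          push_cast at this
          exact this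
        · -- m odd : caseEO with d, a = b+d+1
          obtain ⟨d, hd⟩ : ∃ d, a = b + d + 1 := ⟨a - b - 1, by omega⟩
          have h3 : 2 ≤ b + d := by omega
          subst hna hmb hd
          have eGm : ((2*b+1:ℕ):ℝ)/2 + 1 = (b:ℝ)+3/2 := by push_cast; ring
          have em : ((2*b+1:ℕ):ℝ)/2 = (b:ℝ)+1/2 := by push_cast; ring
          have en : ((b+d+1+(b+d+1):ℕ):ℝ)/2 = ((b+d+1:ℕ):ℝ) := by push_cast; ring
          have enm : (((b+d+1+(b+d+1):ℕ):ℝ) - ((2*b+1:ℕ):ℝ))/2 + 1 = (d:ℝ)+3/2 := by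
            push_cast; ring
          rw [eGm, enm, en, em, Int.ceil_natCast, ceil_half_nat, floor_half_nat]
          have := caseEO b d h3
          push_cast
          push_cast at this
          exact this
      · -- n odd
        rcases Nat.even_or_odd m with ⟨b, hmb⟩ | ⟨b, hmb⟩
        · -- m even : caseOE with c = a - b
          obtain ⟨c, hc⟩ : ∃ c, a = b + c := ⟨a - b, by omega⟩
          have hb1 : 0 < b := by omega
          subst hna hmb hc
          have eGn : ((2*(b+c)+1:ℕ):ℝ)/2 + 1 = ((b:ℝ)+(c:ℝ)+1)+1/2 := by push_cast; ring
          have en : ((2*(b+c)+1:ℕ):ℝ)/2 = ((b+c:ℕ):ℝ)+1/2 := by push_cast; ring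
          have em : ((b+b:ℕ):ℝ)/2 = ((b:ℕ):ℝ) := by push_cast; ring
          have enm : (((2*(b+c)+1:ℕ):ℝ) - ((b+b:ℕ):ℝ))/2 + 1 = (c:ℝ)+3/2 := by push_cast; ring
          rw [eGn, enm, en, em, ceil_half_nat, Int.ceil_natCast, Int.floor_natCast, max_self]
          have := caseOE b c hb1
          push_cast
          push_cast at this
          exact this
        · -- m odd : caseOO with c = a - b ≥ 1
          obtain ⟨c, hc⟩ : ∃ c, a = b + c := ⟨a - b, by omega⟩
          have hc1 : 0 < c := by omega
          subst hna hmb hc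
          have eGn : ((2*(b+c)+1:ℕ):ℝ)/2 + 1 = ((b:ℝ)+(c:ℝ)+1)+1/2 := by push_cast; ring
          have en : ((2*(b+c)+1:ℕ):ℝ)/2 = ((b+c:ℕ):ℝ)+1/2 := by push_cast; ring
          have eGm : ((2*b+1:ℕ):ℝ)/2 + 1 = (b:ℝ)+3/2 := by push_cast; ring
          have em : ((2*b+1:ℕ):ℝ)/2 = (b:ℝ)+1/2 := by push_cast; ring
          have enm : (((2*(b+c)+1:ℕ):ℝ) - ((2*b+1:ℕ):ℝ))/2 + 1 = (c:ℝ)+1 := by push_cast; ring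
          rw [eGn, eGm, enm, en, em, ceil_half_nat, ceil_half_nat, floor_half_nat]
          refine le_trans (caseOO b c hc1) ?_
          apply Real.exp_le_exp.mpr
          have hNpos : (0:ℝ) ≤ ((((b+c:ℕ):ℤ)+1 : ℤ):ℝ) := by push_cast; positivity
          have harg : binEnt (((b:ℝ)+1)/((b:ℝ)+(c:ℝ)+1))
              ≤ max (binEnt (((((b:ℤ)+1 : ℤ)):ℝ) / ((((b+c:ℕ):ℤ)+1 : ℤ):ℝ)))
                    (binEnt (((b:ℤ):ℝ) / ((((b+c:ℕ):ℤ)+1 : ℤ):ℝ))) := by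
            refine le_trans ?_ (le_max_left _ _)
            apply le_of_eq
            congr 1
            push_cast
            ring
          calc ((b:ℝ)+(c:ℝ)+1) * binEnt (((b:ℝ)+1)/((b:ℝ)+(c:ℝ)+1))
              ≤ ((b:ℝ)+(c:ℝ)+1) * max (binEnt (((((b:ℤ)+1 : ℤ)):ℝ) / ((((b+c:ℕ):ℤ)+1 : ℤ):ℝ)))
                    (binEnt (((b:ℤ):ℝ) / ((((b+c:ℕ):ℤ)+1 : ℤ):ℝ))) := by
                apply mul_le_mul_of_nonneg_left harg (by positivity)
            _ = ((((b+c:ℕ):ℤ)+1 : ℤ):ℝ) * max (binEnt (((((b:ℤ)+1 : ℤ)):ℝ) / ((((b+c:ℕ):ℤ)+1 : ℤ):ℝ)))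
                    (binEnt (((b:ℤ):ℝ) / ((((b+c:ℕ):ℤ)+1 : ℤ):ℝ))) := by
                congr 1
                push_cast
                ring
end

section
/- Let x = (x_1, ..., x_d) be a vector of i.i.d. copies of a real random variable X with E|X|^α = ∞ for some α > 0. Then for all p ≥ α, κ ∈ (0,1], and any sequence k_d with k_d/d → κ, almost surely lim_{d→∞} ‖x^{(k_d)} − x‖_p / ‖x‖_p = 0. -/
open MeasureTheory ProbabilityTheory Filter Finset

/-- Sum of the `min k d` largest values of `|v i| ^ p`:
the supremum of `∑_{i ∈ S} |v i|^p` over subsets `S` of cardinality `min k d`. -/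
noncomputable def topKSum (p : ℝ) {d : ℕ} (v : Fin d → ℝ) (k : ℕ) : ℝ :=
  sSup ((fun S : Finset (Fin d) => ∑ i ∈ S, |v i| ^ p) ''
    {S : Finset (Fin d) | S.card = min k d})

/-- Relative `ℓ_p` error of the best `k`-term approximation of `v`. -/
noncomputable def relBestKErr (p : ℝ) {d : ℕ} (v : Fin d → ℝ) (k : ℕ) : ℝ :=
  ((∑ i, |v i| ^ p) - topKSum p v k) ^ (1 / p) / (∑ i, |v i| ^ p) ^ (1 / p)

lemma measurable_abs_rpow (q : ℝ) (hq : 0 ≤ q) : Measurable fun t : ℝ => |t| ^ q := by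
  have hc : Continuous fun s : ℝ => s ^ q :=
    continuous_iff_continuousAt.2 fun x => Real.continuousAt_rpow_const x q (Or.inr hq)
  exact (hc.comp continuous_abs).measurable

lemma topKSum_le_sum (p : ℝ) {d : ℕ} (v : Fin d → ℝ) (k : ℕ) :
    topKSum p v k ≤ ∑ i, |v i| ^ p := by
  apply Real.sSup_le
  · rintro x ⟨S, -, rfl⟩
    exact Finset.sum_le_sum_of_subset_of_nonneg (Finset.subset_univ S)
      (fun i _ _ => Real.rpow_nonneg (abs_nonneg _) _)
  · exact Finset.sum_nonneg fun i _ => Real.rpow_nonneg (abs_nonneg _) _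

lemma sum_sub_topKSum_le (p M : ℝ) (hM : 0 ≤ M) {d : ℕ} (v : Fin d → ℝ) (k : ℕ)
    (h : (univ.filter fun i => M < |v i| ^ p).card ≤ k) :
    (∑ i, |v i| ^ p) - topKSum p v k ≤ d * M := by
  set E := univ.filter fun i : Fin d => M < |v i| ^ p with hE
  have hEd : E.card ≤ min k d := le_min h (by simpa using Finset.card_le_univ E)
  obtain ⟨S, hES, hScard⟩ := Finset.exists_superset_card_eq hEd (by simp [min_le_right])
  have hbdd : BddAbove ((fun S : Finset (Fin d) => ∑ i ∈ S, |v i| ^ p) ''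
      {S : Finset (Fin d) | S.card = min k d}) :=
    ((Set.toFinite _).image _).bddAbove
  have hT : ∑ i ∈ S, |v i| ^ p ≤ topKSum p v k := le_csSup hbdd ⟨S, hScard, rfl⟩
  have hsplit : (∑ i, |v i| ^ p) - ∑ i ∈ S, |v i| ^ p = ∑ i ∈ Sᶜ, |v i| ^ p := by
    have := Finset.sum_add_sum_compl S fun i => |v i| ^ p
    linarith
  have hsmall : ∀ i ∈ Sᶜ, |v i| ^ p ≤ M := by
    intro i hi
    by_contra hlt
    exact (Finset.mem_compl.1 hi) (hES (by simp [hE, lt_of_not_ge hlt]))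
  calc (∑ i, |v i| ^ p) - topKSum p v k ≤ (∑ i, |v i| ^ p) - ∑ i ∈ S, |v i| ^ p := by linarith
    _ = ∑ i ∈ Sᶜ, |v i| ^ p := hsplit
    _ ≤ ∑ _i ∈ Sᶜ, M := Finset.sum_le_sum hsmall
    _ = Sᶜ.card * M := by rw [Finset.sum_const, nsmul_eq_mul]
    _ ≤ d * M := by
        apply mul_le_mul_of_nonneg_right _ hM
        exact_mod_cast Nat.cast_le.2 ((Finset.card_le_univ Sᶜ).trans_eq (Fintype.card_fin d))



theorem heavyTailed_iid_compressible
    {Ω : Type*} [MeasurableSpace Ω] (μ : Measure Ω) [IsProbabilityMeasure μ]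
    (X : ℕ → Ω → ℝ) (hmeas : ∀ i, Measurable (X i))
    (hindep : iIndepFun X μ)
    (hident : ∀ i, IdentDistrib (X i) (X 0) μ μ)
    (α : ℝ) (hα : 0 < α)
    (hheavy : ¬ Integrable (fun ω => |X 0 ω| ^ α) μ) :
    ∀ p : ℝ, α ≤ p → ∀ κ : ℝ, κ ∈ Set.Ioc (0 : ℝ) 1 →
    ∀ k : ℕ → ℕ, Tendsto (fun d => (k d : ℝ) / d) atTop (nhds κ) →
    ∀ᵐ ω ∂μ, Tendsto (fun d => relBestKErr p (fun i : Fin d => X i ω) (k d))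
      atTop (nhds 0) := by
  intro p hαp κ hκ k hk
  have hp : 0 < p := lt_of_lt_of_le hα hαp
  have hmp : Measurable fun ω => |X 0 ω| ^ p := (measurable_abs_rpow p hp.le).comp (hmeas 0)
  -- infinite p-th moment
  have hEp : ¬ Integrable (fun ω => |X 0 ω| ^ p) μ := by
    intro h
    apply hheavy
    apply Integrable.mono' (h.add (integrable_const 1))
      ((measurable_abs_rpow α hα.le).comp (hmeas 0)).aestronglyMeasurable
    refine ae_of_all _ fun ω => ?_
    simp only [Function.comp_apply, Pi.add_apply, Real.norm_eq_abs]
    rw [abs_of_nonneg (Real.rpow_nonneg (abs_nonneg _) _)]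
    rcases le_total (|X 0 ω|) 1 with h1 | h1
    · have : (0:ℝ) ≤ |X 0 ω| ^ p := Real.rpow_nonneg (abs_nonneg _) _
      linarith [Real.rpow_le_one (abs_nonneg (X 0 ω)) h1 hα.le]
    · have := Real.rpow_le_rpow_of_exponent_le h1 hαp
      linarith
  -- lintegral infinite
  have h1 : ∫⁻ ω, ENNReal.ofReal (|X 0 ω| ^ p) ∂μ = ⊤ := by
    by_contra h
    exact hEp ⟨hmp.aestronglyMeasurable,
      (hasFiniteIntegral_iff_ofReal (ae_of_all _ fun ω => Real.rpow_nonneg (abs_nonneg _) _)).2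
        (lt_top_iff_ne_top.2 h)⟩
  -- monotone convergence
  have h2 : ⨆ C : ℕ, ∫⁻ ω, min (ENNReal.ofReal (|X 0 ω| ^ p)) C ∂μ = ⊤ := by
    rw [← lintegral_iSup (fun n => hmp.ennreal_ofReal.min measurable_const)
      (fun a b hab ω => min_le_min le_rfl (by exact_mod_cast Nat.cast_le.2 hab))]
    rw [← h1]
    congr 1
    ext ω
    apply le_antisymm (iSup_le fun n => min_le_left _ _)
    obtain ⟨n, hn⟩ := ENNReal.exists_nat_gt (ENNReal.ofReal_ne_top (r := |X 0 ω| ^ p))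
    calc ENNReal.ofReal (|X 0 ω| ^ p) = min (ENNReal.ofReal (|X 0 ω| ^ p)) n :=
          (min_eq_left hn.le).symm
      _ ≤ ⨆ C : ℕ, min (ENNReal.ofReal (|X 0 ω| ^ p)) (C:ENNReal) :=
          le_iSup (fun C : ℕ => min (ENNReal.ofReal (|X 0 ω| ^ p)) (C:ENNReal)) n
  -- truncated means are unbounded
  have hm : ∀ A : ℝ, ∃ C : ℕ, A ≤ ∫ ω, min (|X 0 ω| ^ p) C ∂μ := by
    intro A
    have hlt : ENNReal.ofReal (max A 0) < ⨆ C : ℕ, ∫⁻ ω, min (ENNReal.ofReal (|X 0 ω| ^ p)) C ∂μ :=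
      h2 ▸ ENNReal.ofReal_lt_top
    obtain ⟨C, hC⟩ := lt_iSup_iff.1 hlt
    refine ⟨C, ?_⟩
    have hLle : ∫⁻ ω, min (ENNReal.ofReal (|X 0 ω| ^ p)) C ∂μ ≤ C := by
      calc ∫⁻ ω, min (ENNReal.ofReal (|X 0 ω| ^ p)) C ∂μ ≤ ∫⁻ _, (C : ENNReal) ∂μ :=
            lintegral_mono fun ω => min_le_right _ _
        _ = C := by simp
    have hLne : ∫⁻ ω, min (ENNReal.ofReal (|X 0 ω| ^ p)) C ∂μ ≠ ⊤ :=
      ne_top_of_le_ne_top (ENNReal.natCast_ne_top C) hLle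
    have heq : ∫ ω, min (|X 0 ω| ^ p) C ∂μ
        = (∫⁻ ω, min (ENNReal.ofReal (|X 0 ω| ^ p)) C ∂μ).toReal := by
      rw [integral_eq_lintegral_of_nonneg_ae
        (ae_of_all _ fun ω => le_min (Real.rpow_nonneg (abs_nonneg _) _) (Nat.cast_nonneg C))
        ((hmp.min measurable_const).aestronglyMeasurable)]
      congr 1
      refine lintegral_congr fun ω => ?_
      rcases le_total (|X 0 ω| ^ p) (C : ℝ) with h | h
      · rw [min_eq_left h, min_eq_left (ENNReal.ofReal_le_ofReal h |>.trans (by simp))]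
      · rw [min_eq_right h, min_eq_right]
        · simp
        · calc (C : ENNReal) = ENNReal.ofReal (C : ℝ) := by simp
            _ ≤ ENNReal.ofReal (|X 0 ω| ^ p) := ENNReal.ofReal_le_ofReal h
    rw [heq]
    calc A ≤ max A 0 := le_max_left _ _
      _ = (ENNReal.ofReal (max A 0)).toReal := (ENNReal.toReal_ofReal (le_max_right _ _)).symm
      _ ≤ _ := (ENNReal.toReal_le_toReal ENNReal.ofReal_ne_top hLne).2 hC.le
  obtain ⟨hκ0, hκ1⟩ := hκ
  -- choose the threshold M = n₀
  have hsets : ∀ n : ℕ, MeasurableSet {ω | (n:ℝ) < |X 0 ω| ^ p} :=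
    fun n => measurableSet_lt measurable_const hmp
  have htail : Tendsto (fun n : ℕ => μ {ω | (n:ℝ) < |X 0 ω| ^ p}) atTop (nhds 0) := by
    have hanti : Antitone fun n : ℕ => {ω | (n:ℝ) < |X 0 ω| ^ p} := by
      intro a b hab ω hω
      have hω' : (b:ℝ) < |X 0 ω| ^ p := hω
      exact Set.mem_setOf_eq ▸ lt_of_le_of_lt (by exact_mod_cast hab : (a:ℝ) ≤ (b:ℝ)) hω'
    have := tendsto_measure_iInter_atTop (μ := μ)
      (fun n => (hsets n).nullMeasurableSet) hanti ⟨0, measure_ne_top μ _⟩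
    have hempty : (⋂ n : ℕ, {ω | (n:ℝ) < |X 0 ω| ^ p}) = ∅ := by
      rw [Set.eq_empty_iff_forall_notMem]
      intro ω hω
      obtain ⟨n, hn⟩ := exists_nat_ge (|X 0 ω| ^ p)
      exact absurd (Set.mem_iInter.1 hω n) (not_lt.2 hn)
    rw [hempty] at this
    simpa [Function.comp_def] using this
  obtain ⟨n₀, hn₀⟩ := (htail.eventually_lt_const
    (ENNReal.ofReal_pos.2 (by linarith : (0:ℝ) < κ/2))).exists
  set M : ℝ := (n₀ : ℝ) with hM
  have hM0 : 0 ≤ M := Nat.cast_nonneg n₀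
  set s : Set Ω := {ω | M < |X 0 ω| ^ p} with hs
  have hsm : MeasurableSet s := hsets n₀
  set q : ℝ := (μ s).toReal with hq
  have hqlt : q < κ / 2 := ENNReal.toReal_lt_of_lt_ofReal hn₀
  -- the measurable maps on ℝ
  have hg1 : Measurable fun t : ℝ => if M < |t| ^ p then (1:ℝ) else 0 :=
    Measurable.ite (measurableSet_lt measurable_const (measurable_abs_rpow p hp.le))
      measurable_const measurable_const
  have hg2 : ∀ C : ℕ, Measurable fun t : ℝ => min (|t| ^ p) C :=
    fun C => (measurable_abs_rpow p hp.le).min measurable_const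
  -- SLLN for the indicator
  have hsl1 : ∀ᵐ ω ∂μ, Tendsto
      (fun n : ℕ => (∑ i ∈ range n, (if M < |X i ω| ^ p then (1:ℝ) else 0)) / n)
      atTop (nhds q) := by
    have hind : (fun ω => if M < |X 0 ω| ^ p then (1:ℝ) else 0)
        = s.indicator fun _ => (1:ℝ) := by
      ext ω
      simp [Set.indicator_apply, hs, Set.mem_setOf_eq]
    have hint : Integrable (fun ω => if M < |X 0 ω| ^ p then (1:ℝ) else 0) μ := by
      rw [hind]
      exact (integrable_indicator_iff hsm).2
        (integrableOn_const (C := (1:ℝ)) (measure_ne_top μ s))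
    have := strong_law_ae_real (fun i ω => if M < |X i ω| ^ p then (1:ℝ) else 0)
      hint
      (fun i j hij => ((hindep.indepFun hij).comp hg1 hg1 : _))
      (fun i => (hident i).comp hg1)
    have hiq : ∫ ω, (if M < |X 0 ω| ^ p then (1:ℝ) else 0) ∂μ = q := by
      rw [hind, integral_indicator_const (1:ℝ) hsm, smul_eq_mul, mul_one]; rfl
    rw [hiq] at this
    exact this
  -- SLLN for the truncations
  have hsl2 : ∀ᵐ ω ∂μ, ∀ C : ℕ, Tendsto
      (fun n : ℕ => (∑ i ∈ range n, min (|X i ω| ^ p) C) / n)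
      atTop (nhds (∫ ω, min (|X 0 ω| ^ p) C ∂μ)) := by
    rw [ae_all_iff]
    intro C
    apply strong_law_ae_real (fun i ω => min (|X i ω| ^ p) C)
    · apply Integrable.mono' (integrable_const (C:ℝ))
        ((hg2 C).comp (hmeas 0)).aestronglyMeasurable
      refine ae_of_all _ fun ω => ?_
      simp only [Function.comp_apply]
      rw [Real.norm_eq_abs, abs_of_nonneg
        (le_min (Real.rpow_nonneg (abs_nonneg _) _) (Nat.cast_nonneg C))]
      exact min_le_right _ _
    · exact fun i j hij => ((hindep.indepFun hij).comp (hg2 C) (hg2 C) : _)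
    · exact fun i => (hident i).comp (hg2 C)
  filter_upwards [hsl1, hsl2] with ω hω1 hω2
  -- notation
  set Ssum : ℕ → ℝ := fun d => ∑ i ∈ range d, |X i ω| ^ p with hSsum
  -- S d / d → ∞
  have claim1 : Tendsto (fun d : ℕ => Ssum d / d) atTop atTop := by
    rw [tendsto_atTop]
    intro A
    obtain ⟨C, hC⟩ := hm (A + 1)
    have hev := (hω2 C).eventually_const_lt (show A < ∫ ω, min (|X 0 ω| ^ p) C ∂μ by linarith)
    filter_upwards [hev, eventually_ge_atTop 1] with d hd1 hd2
    have hd0 : (0:ℝ) < d := by exact_mod_cast hd2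
    have hle : (∑ i ∈ range d, min (|X i ω| ^ p) C) / d ≤ Ssum d / d := by
      apply div_le_div_of_nonneg_right _ hd0.le
      exact Finset.sum_le_sum fun i _ => min_le_left _ _
    linarith
  -- eventually positive sums
  have claim3 : ∀ᶠ d : ℕ in atTop, 0 < Ssum d := by
    have := tendsto_atTop.1 claim1 1
    filter_upwards [this, eventually_ge_atTop 1] with d h1 h2
    have hd0 : (0:ℝ) < d := by exact_mod_cast h2
    nlinarith [div_mul_cancel₀ (Ssum d) hd0.ne']
  -- eventually exceedance count ≤ k d
  have claim2 : ∀ᶠ d : ℕ in atTop,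
      ((univ.filter fun i : Fin d => M < |X (i:ℕ) ω| ^ p).card) ≤ k d := by
    have hev1 := hω1.eventually_lt_const hqlt
    have hev2 := hk.eventually_const_lt (show κ/2 < κ by linarith)
    filter_upwards [hev1, hev2, eventually_ge_atTop 1] with d h1 h2 h3
    have hd0 : (0:ℝ) < d := by exact_mod_cast h3
    have hcard : ((univ.filter fun i : Fin d => M < |X (i:ℕ) ω| ^ p).card : ℝ)
        = ∑ i ∈ range d, (if M < |X i ω| ^ p then (1:ℝ) else 0) := by
      rw [Finset.card_filter]
      push_cast
      exact Fin.sum_univ_eq_sum_range (fun i => if M < |X i ω| ^ p then (1:ℝ) else 0) d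
    have : ((univ.filter fun i : Fin d => M < |X (i:ℕ) ω| ^ p).card : ℝ) < k d := by
      rw [hcard]
      have h4 : (∑ i ∈ range d, (if M < |X i ω| ^ p then (1:ℝ) else 0)) / d < (k d : ℝ) / d :=
        lt_trans h1 h2
      exact (div_lt_div_iff_of_pos_right hd0).1 h4
    exact_mod_cast this.le
  -- the squeeze
  have hbound : Tendsto (fun d : ℕ => (M / (Ssum d / d)) ^ (1/p)) atTop (nhds 0) := by
    have hdiv : Tendsto (fun d : ℕ => M / (Ssum d / d)) atTop (nhds 0) :=
      Tendsto.div_atTop tendsto_const_nhds claim1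
    have hcont : ContinuousAt (fun t : ℝ => t ^ (1/p)) 0 :=
      Real.continuousAt_rpow_const 0 (1/p) (Or.inr (by positivity))
    have := hcont.tendsto.comp hdiv
    rw [Real.zero_rpow (by positivity : (1:ℝ)/p ≠ 0)] at this
    exact this
  apply squeeze_zero' ?_ ?_ hbound
  · filter_upwards [claim3] with d hpos
    apply div_nonneg
    · apply Real.rpow_nonneg
      have := topKSum_le_sum p (fun i : Fin d => X (i:ℕ) ω) (k d)
      have heq : ∑ i : Fin d, |X (i:ℕ) ω| ^ p = Ssum d :=
        Fin.sum_univ_eq_sum_range (fun i => |X i ω| ^ p) d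
      rw [heq] at this
      simp only [relBestKErr]
      linarith [heq ▸ this]
    · exact Real.rpow_nonneg (Finset.sum_nonneg fun i _ =>
        Real.rpow_nonneg (abs_nonneg _) _) _
  · filter_upwards [claim2, claim3, eventually_ge_atTop 1] with d hcnt hpos hd1
    have hd0 : (0:ℝ) < d := by exact_mod_cast hd1
    set v : Fin d → ℝ := fun i => X (i:ℕ) ω with hv
    have hsum_eq : ∑ i : Fin d, |v i| ^ p = Ssum d :=
      Fin.sum_univ_eq_sum_range (fun i => |X i ω| ^ p) d
    have hT_le : topKSum p v (k d) ≤ Ssum d := hsum_eq ▸ topKSum_le_sum p v (k d)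
    have hdiff : Ssum d - topKSum p v (k d) ≤ d * M := by
      have := sum_sub_topKSum_le p M hM0 v (k d) hcnt
      rw [hsum_eq] at this
      exact this
    have hSpos : (0:ℝ) < Ssum d := hpos
    rw [relBestKErr, hsum_eq]
    have hnum : (Ssum d - topKSum p v (k d)) ^ (1/p) ≤ ((d:ℝ) * M) ^ (1/p) :=
      Real.rpow_le_rpow (by linarith) hdiff (by positivity)
    calc (Ssum d - topKSum p v (k d)) ^ (1/p) / (Ssum d) ^ (1/p)
        ≤ ((d:ℝ) * M) ^ (1/p) / (Ssum d) ^ (1/p) :=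
          div_le_div_of_nonneg_right hnum (Real.rpow_nonneg hSpos.le _)
      _ = (((d:ℝ) * M) / Ssum d) ^ (1/p) :=
          (Real.div_rpow (by positivity) hSpos.le _).symm
      _ = (M / (Ssum d / d)) ^ (1/p) := by
          rw [div_div_eq_mul_div, mul_comm]
end

section
/- Define g(κ) = ε^{1−κ}·exp((3/2)·h_b(κ)) for ε ∈ (0,1) and κ ∈ [0,1], where h_b is binary entropy in nats. Then g attains its maximum over [0,1] at κ* = 1/(1 + ε^{2/3}), with g(κ*) = (1 + ε^{2/3})^{3/2} > 1; moreover g is increasing on [0, κ*], hence ρ_ε(κ) := min(g(κ), 1) is nondecreasing in κ on [0,1]. -/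
theorem rho_eps_monotone (ε : ℝ) (hε : ε ∈ Set.Ioo (0 : ℝ) 1)
    (g : ℝ → ℝ) (hg : ∀ κ, g κ = ε ^ (1 - κ) * Real.exp ((3 / 2) * binEnt κ))
    (κstar : ℝ) (hκstar : κstar = 1 / (1 + ε ^ ((2 : ℝ) / 3))) :
    (∀ κ ∈ Set.Icc (0 : ℝ) 1, g κ ≤ g κstar) ∧
    g κstar = (1 + ε ^ ((2 : ℝ) / 3)) ^ ((3 : ℝ) / 2) ∧
    1 < g κstar ∧
    MonotoneOn g (Set.Icc 0 κstar) ∧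
    MonotoneOn (fun κ => min (g κ) 1) (Set.Icc (0 : ℝ) 1) := by
  obtain ⟨hε0, hε1⟩ := hε
  have hbe : binEnt = Real.binEntropy := by
    funext x; simp [binEnt, Real.binEntropy, Real.log_inv]; ring
  set a := ε ^ ((2:ℝ)/3) with hadef
  have ha0 : 0 < a := Real.rpow_pos_of_pos hε0 _
  have ha1 : a < 1 := Real.rpow_lt_one hε0.le hε1 (by norm_num)
  have h1a : (0:ℝ) < 1 + a := by linarith
  have hκ0 : 0 < κstar := by rw [hκstar]; positivity
  have hκ1 : κstar < 1 := by rw [hκstar, div_lt_one h1a]; linarith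
  have hloga : Real.log ε = (3/2) * Real.log a := by
    rw [hadef, Real.log_rpow hε0]; ring
  set F : ℝ → ℝ := fun κ => (1-κ) * Real.log ε + (3/2) * Real.binEntropy κ with hF
  have hgF : ∀ κ, g κ = Real.exp (F κ) := by
    intro κ
    rw [hg, hbe, Real.rpow_def_of_pos hε0, ← Real.exp_add, hF]
    congr 1; ring
  have hFd : ∀ κ, κ ∈ Set.Ioo (0:ℝ) 1 →
      HasDerivAt F ((3/2) * (Real.log (1-κ) - Real.log κ - Real.log a)) κ := by
    rintro κ ⟨h0, h1⟩
    have h := (Real.hasDerivAt_binEntropy (ne_of_gt h0) (ne_of_lt h1)).const_mul ((3:ℝ)/2)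
    have h2 : HasDerivAt (fun κ : ℝ => (1-κ) * Real.log ε) (-Real.log ε) κ := by
      simpa using ((hasDerivAt_id κ).const_sub 1).mul_const (Real.log ε)
    have := h2.add h
    exact this.congr_deriv (by rw [hloga]; ring)
  have hFc : Continuous F := by
    exact ((continuous_const.sub continuous_id).mul continuous_const).add
      (continuous_const.mul Real.binEntropy_continuous)
  -- strict mono on [0, κstar]
  have hmono : StrictMonoOn F (Set.Icc 0 κstar) := by
    apply strictMonoOn_of_deriv_pos (convex_Icc _ _) hFc.continuousOn
    intro x hx
    rw [interior_Icc] at hx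
    obtain ⟨hx0, hx1⟩ := hx
    have hx1' : x < 1 := lt_trans hx1 hκ1
    rw [((hFd x ⟨hx0, hx1'⟩)).deriv]
    have hxa : x * a < 1 - x := by
      have : x * (1 + a) < 1 := by
        rw [hκstar, lt_div_iff₀ h1a] at hx1; linarith
      linarith
    have : Real.log (x * a) < Real.log (1 - x) :=
      Real.log_lt_log (by positivity) hxa
    rw [Real.log_mul (ne_of_gt hx0) (ne_of_gt ha0)] at this
    linarith
  -- strict anti on [κstar, 1]
  have hanti : StrictAntiOn F (Set.Icc κstar 1) := by
    apply strictAntiOn_of_deriv_neg (convex_Icc _ _) hFc.continuousOn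
    intro x hx
    rw [interior_Icc] at hx
    obtain ⟨hx0, hx1⟩ := hx
    have hx0' : 0 < x := lt_trans hκ0 hx0
    rw [((hFd x ⟨hx0', hx1⟩)).deriv]
    have hxa : 1 - x < x * a := by
      have : 1 < x * (1 + a) := by
        rw [hκstar, div_lt_iff₀ h1a] at hx0; linarith
      linarith
    have : Real.log (1 - x) < Real.log (x * a) :=
      Real.log_lt_log (by linarith) hxa
    rw [Real.log_mul (ne_of_gt hx0') (ne_of_gt ha0)] at this
    linarith
  -- value at κstar
  have h1mk : 1 - κstar = a/(1+a) := by rw [hκstar]; field_simp; ring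
  have hlogk : Real.log κstar = -Real.log (1+a) := by
    rw [hκstar, one_div, Real.log_inv]
  have hlog1mk : Real.log (1-κstar) = Real.log a - Real.log (1+a) := by
    rw [h1mk, Real.log_div (ne_of_gt ha0) (ne_of_gt h1a)]
  have hbval : Real.binEntropy κstar = Real.log (1+a) - (a/(1+a)) * Real.log a := by
    rw [← hbe]
    unfold binEnt
    rw [hlogk, hlog1mk, h1mk, hκstar]
    field_simp
    ring
  have hFval : F κstar = (3/2) * Real.log (1+a) := by
    rw [hF]
    simp only
    rw [hbval, h1mk, hloga]
    field_simp
    ring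
  have hgval : g κstar = (1 + a) ^ ((3:ℝ)/2) := by
    rw [hgF, hFval, Real.rpow_def_of_pos h1a]
    ring_nf
  -- F 1 = 0 and F ≥ 0 on [κstar, 1]
  have hF1 : F 1 = 0 := by simp [hF]
  have hge1 : ∀ κ ∈ Set.Icc κstar 1, (1:ℝ) ≤ g κ := by
    intro κ ⟨hk1, hk2⟩
    rw [hgF]
    rw [show (1:ℝ) = Real.exp 0 from (Real.exp_zero).symm]
    apply Real.exp_le_exp.mpr
    rw [← hF1]
    rcases eq_or_lt_of_le hk2 with h | h
    · rw [h]
    · exact le_of_lt (hanti ⟨hk1, hk2⟩ ⟨le_of_lt (lt_of_le_of_lt hk1 h), le_refl 1⟩ h)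
  have hgmono : MonotoneOn g (Set.Icc 0 κstar) := by
    intro x hx y hy hxy
    rw [hgF, hgF]
    exact Real.exp_le_exp.mpr (hmono.monotoneOn hx hy hxy)
  have hmax : ∀ κ ∈ Set.Icc (0:ℝ) 1, g κ ≤ g κstar := by
    intro κ ⟨hk1, hk2⟩
    rcases le_total κ κstar with h | h
    · exact hgmono ⟨hk1, h⟩ ⟨hκ0.le, le_refl _⟩ h
    · rw [hgF, hgF]
      apply Real.exp_le_exp.mpr
      exact hanti.antitoneOn ⟨le_refl _, hκ1.le⟩ ⟨h, hk2⟩ h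
  refine ⟨hmax, hgval, ?_, hgmono, ?_⟩
  · rw [hgval]
    exact Real.one_lt_rpow_iff_of_pos h1a |>.mpr (Or.inl ⟨by linarith, by norm_num⟩)
  · intro x hx y hy hxy
    simp only
    rcases le_total y κstar with h | h
    · exact min_le_min (hgmono ⟨hx.1, le_trans hxy h⟩ ⟨hy.1, h⟩ hxy) (le_refl 1)
    · rw [min_eq_right (hge1 y ⟨h, hy.2⟩)]
      exact min_le_right _ _
end

section
/- Let x = (x_1, ..., x_d) where for l = 1,...,L the block x_l ∈ R^{d_l} has i.i.d. symmetric α_l-stable entries with scale parameters normalized so that the tail bound P(|x_{l,i}| ≥ a) ≤ 4·(3σ_l/a)^{α_l} holds for a ≥ 4σ_l/(2−α_l), with α_l ∈ (1,2) and the blocks independent. Set σ² = Σ_l (d_l/d) σ_l² and α = min_l α_l. Then for every δ < 2d(2 − max_l α_l)^α, P(‖x‖ ≥ 3σ√d·(4d/δ)^{1/α}) ≤ δ. -/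
open MeasureTheory ProbabilityTheory Finset

set_option maxHeartbeats 1000000 in
theorem heavy_tailed_norm_bound
    {Ω : Type*} [MeasurableSpace Ω] (μ : Measure Ω) [IsProbabilityMeasure μ]
    (L : ℕ) (hL : 1 ≤ L) (dl : Fin L → ℕ) (hdl : ∀ l, 1 ≤ dl l)
    (x : (Σ l : Fin L, Fin (dl l)) → Ω → ℝ)
    (hmeas : ∀ li, Measurable (x li))
    -- all coordinates independent (i.i.d. entries within each block, blocks independent)
    (hindep : iIndepFun x μ)
    -- identically distributed within each block
    (hident : ∀ (l : Fin L) (i i' : Fin (dl l)),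
      IdentDistrib (x ⟨l, i⟩) (x ⟨l, i'⟩) μ μ)
    (α : Fin L → ℝ) (hα : ∀ l, α l ∈ Set.Ioo (1 : ℝ) 2)
    (σl : Fin L → ℝ) (hσl : ∀ l, 0 < σl l)
    -- the normalized symmetric stable tail bound
    (htail : ∀ (l : Fin L) (i : Fin (dl l)) (a : ℝ), 4 * σl l / (2 - α l) ≤ a →
      μ {ω | a ≤ |x ⟨l, i⟩ ω|} ≤ ENNReal.ofReal (4 * (3 * σl l / a) ^ (α l)))
    (d : ℕ) (hd : d = ∑ l, dl l)
    (σ : ℝ) (hσ : σ = Real.sqrt (∑ l, ((dl l : ℝ) / d) * σl l ^ 2))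
    (αmin αmax : ℝ)
    (hαmin : αmin = Finset.univ.inf' (by simp [Finset.univ_nonempty_iff]; exact Fin.pos_iff_nonempty.mp (by omega)) α)
    (hαmax : αmax = Finset.univ.sup' (by simp [Finset.univ_nonempty_iff]; exact Fin.pos_iff_nonempty.mp (by omega)) α)
    (δ : ℝ) (hδpos : 0 < δ) (hδ : δ < 2 * d * (2 - αmax) ^ αmin) :
    μ {ω | 3 * σ * Real.sqrt d * (4 * d / δ) ^ (1 / αmin) ≤
        Real.sqrt (∑ li : Σ l : Fin L, Fin (dl l), (x li ω) ^ 2)} ≤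
      ENNReal.ofReal δ := by
  have hLpos : 0 < L := hL
  have hne : (Finset.univ : Finset (Fin L)).Nonempty := by
    simp [Finset.univ_nonempty_iff]; exact Fin.pos_iff_nonempty.mp (by omega)
  -- αmin and αmax are attained
  obtain ⟨l₀, -, hl₀⟩ := Finset.exists_mem_eq_inf' hne α
  obtain ⟨l₁, -, hl₁⟩ := Finset.exists_mem_eq_sup' hne α
  have hαmin_eq : αmin = α l₀ := by rw [hαmin]; exact hl₀
  have hαmax_eq : αmax = α l₁ := by rw [hαmax]; exact hl₁
  have hp1 : 1 < αmin := by rw [hαmin_eq]; exact (hα l₀).1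
  have hp2 : αmin < 2 := by rw [hαmin_eq]; exact (hα l₀).2
  have hm1 : 1 < αmax := by rw [hαmax_eq]; exact (hα l₁).1
  have hm2 : αmax < 2 := by rw [hαmax_eq]; exact (hα l₁).2
  have hminle : ∀ l, αmin ≤ α l := by
    intro l; rw [hαmin]; exact Finset.inf'_le α (Finset.mem_univ l)
  have hlemax : ∀ l, α l ≤ αmax := by
    intro l; rw [hαmax]; exact Finset.le_sup' α (Finset.mem_univ l)
  -- d ≥ 1
  have hd1 : 1 ≤ d := by
    have : L = ∑ _l : Fin L, 1 := by simp
    have h2 : ∑ _l : Fin L, 1 ≤ ∑ l, dl l := Finset.sum_le_sum fun l _ => hdl l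
    omega
  have hdpos : (0 : ℝ) < d := by exact_mod_cast Nat.lt_of_lt_of_le Nat.zero_lt_one hd1
  -- q := (2 - αmax) ^ αmin
  have hqpos : (0 : ℝ) < (2 - αmax) ^ αmin := Real.rpow_pos_of_pos (by linarith) _
  have hq1 : (2 - αmax) ^ αmin ≤ 1 :=
    Real.rpow_le_one (by linarith) (by linarith) (by linarith)
  have hδ2d : δ < 2 * d := by nlinarith
  -- the scaling constant c
  set c : ℝ := (4 * d / δ) ^ (1 / αmin) with hcdef
  have hbase1 : (1 : ℝ) < 4 * d / δ := (one_lt_div hδpos).mpr (by linarith)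
  have hc0 : 0 < c := Real.rpow_pos_of_pos (by linarith) _
  have hc1 : 1 < c :=
    (Real.one_lt_rpow_iff_of_pos (by linarith)).mpr (Or.inl ⟨hbase1, by positivity⟩)
  have hcpow : c ^ αmin = 4 * d / δ := by
    rw [hcdef, ← Real.rpow_mul (by positivity), one_div,
      inv_mul_cancel₀ (by linarith), Real.rpow_one]
  -- lower bound on c
  have hb : 4 / (3 * (2 - αmax)) ≤ c := by
    by_contra hcon
    push_neg at hcon
    have h1 : c ^ αmin ≤ (4 / (3 * (2 - αmax))) ^ αmin :=
      Real.rpow_le_rpow hc0.le hcon.le (by linarith)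
    have h2 : ((4 : ℝ) / (3 * (2 - αmax))) ^ αmin
        = (4 / 3 : ℝ) ^ αmin / (2 - αmax) ^ αmin := by
      rw [show (4 : ℝ) / (3 * (2 - αmax)) = (4 / 3) / (2 - αmax) from (div_div 4 3 _).symm,
        Real.div_rpow (by norm_num) (by linarith)]
    have h3 : (4 / 3 : ℝ) ^ αmin ≤ (4 / 3 : ℝ) ^ (2 : ℝ) :=
      Real.rpow_le_rpow_of_exponent_le (by norm_num) (by linarith)
    have h4 : ((4 : ℝ) / 3) ^ (2 : ℝ) = 16 / 9 := by
      rw [show (2 : ℝ) = ((2 : ℕ) : ℝ) by norm_num, Real.rpow_natCast]; norm_num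
    rw [hcpow, h2] at h1
    have h5 : 4 * d / δ ≤ (16 / 9) / (2 - αmax) ^ αmin :=
      le_trans h1 ((div_le_div_iff_of_pos_right hqpos).mpr (h4 ▸ h3))
    rw [div_le_div_iff₀ hδpos hqpos] at h5
    nlinarith [mul_pos hdpos hqpos]
  -- applicability of the tail bound for each block
  have hcb : ∀ l : Fin L, 4 * σl l / (2 - α l) ≤ 3 * σl l * c := by
    intro l
    have hαl2 : α l < 2 := (hα l).2
    have h2 : 2 - αmax ≤ 2 - α l := by linarith [hlemax l]
    have hpos : (0 : ℝ) < 2 - α l := by linarith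
    rw [div_le_iff₀ hpos]
    have hmaxpos : (0 : ℝ) < 3 * (2 - αmax) := by linarith
    have h3 : 4 ≤ c * (3 * (2 - αmax)) := by
      have h := mul_le_mul_of_nonneg_right hb hmaxpos.le
      rwa [div_mul_cancel₀ _ hmaxpos.ne'] at h
    have h4 : c * (3 * (2 - αmax)) ≤ c * (3 * (2 - α l)) :=
      mul_le_mul_of_nonneg_left (by linarith) hc0.le
    have h6 : 4 * σl l ≤ c * (3 * (2 - α l)) * σl l :=
      mul_le_mul_of_nonneg_right (h3.trans h4) (hσl l).le
    nlinarith [h6]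
  -- nonempty index type
  have hne' : Nonempty (Σ l : Fin L, Fin (dl l)) :=
    ⟨⟨⟨0, by omega⟩, ⟨0, Nat.lt_of_lt_of_le Nat.zero_lt_one (hdl _)⟩⟩⟩
  -- sums identity
  have hσ2 : σ ^ 2 = ∑ l, ((dl l : ℝ) / d) * σl l ^ 2 := by
    rw [hσ, Real.sq_sqrt]
    exact Finset.sum_nonneg fun l _ => by positivity
  have hdσ : (d : ℝ) * σ ^ 2 = ∑ l, (dl l : ℝ) * σl l ^ 2 := by
    rw [hσ2, Finset.mul_sum]
    exact Finset.sum_congr rfl fun l _ => by field_simp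
  have hLHS : ∑ li : Σ l : Fin L, Fin (dl l), (3 * σl li.1 * c) ^ 2
      = 9 * c ^ 2 * ∑ l, (dl l : ℝ) * σl l ^ 2 := by
    rw [← Finset.univ_sigma_univ, Finset.sum_sigma, Finset.mul_sum]
    refine Finset.sum_congr rfl fun l _ => ?_
    have he : ∀ s : Fin (dl l), (3 * σl (⟨l, s⟩ : Σ l', Fin (dl l')).1 * c) ^ 2
        = 9 * c ^ 2 * σl l ^ 2 := fun s => by ring
    rw [Finset.sum_congr rfl fun s _ => he s, Finset.sum_const, Finset.card_univ,
      Fintype.card_fin, nsmul_eq_mul]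
    ring
  have hRHS : (3 * σ * Real.sqrt d * c) ^ 2 = 9 * c ^ 2 * ∑ l, (dl l : ℝ) * σl l ^ 2 := by
    have h1 : Real.sqrt d ^ 2 = (d : ℝ) := Real.sq_sqrt hdpos.le
    calc (3 * σ * Real.sqrt d * c) ^ 2 = 9 * c ^ 2 * (Real.sqrt d ^ 2 * σ ^ 2) := by ring
      _ = 9 * c ^ 2 * ((d : ℝ) * σ ^ 2) := by rw [h1]
      _ = 9 * c ^ 2 * ∑ l, (dl l : ℝ) * σl l ^ 2 := by rw [hdσ]
  -- the bad sets
  set S : (Σ l : Fin L, Fin (dl l)) → Set Ω := fun li => {ω | 3 * σl li.1 * c ≤ |x li ω|}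
    with hSdef
  have hσnn : 0 ≤ σ := by rw [hσ]; exact Real.sqrt_nonneg _
  have htnn : 0 ≤ 3 * σ * Real.sqrt d * c := by positivity
  have hsubset : {ω | 3 * σ * Real.sqrt d * c ≤
        Real.sqrt (∑ li : Σ l : Fin L, Fin (dl l), (x li ω) ^ 2)} ⊆
      ⋃ li ∈ Finset.univ, S li := by
    intro ω hω
    simp only [Set.mem_setOf_eq] at hω
    by_contra hcon
    simp only [Set.mem_iUnion, hSdef, Set.mem_setOf_eq, Finset.mem_univ, exists_prop,
      true_and, not_exists, not_le] at hcon
    have hlt : ∑ li : Σ l : Fin L, Fin (dl l), (x li ω) ^ 2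
        < ∑ li : Σ l : Fin L, Fin (dl l), (3 * σl li.1 * c) ^ 2 := by
      apply Finset.sum_lt_sum_of_nonempty Finset.univ_nonempty
      intro li _
      calc (x li ω) ^ 2 = |x li ω| ^ 2 := (sq_abs _).symm
        _ < (3 * σl li.1 * c) ^ 2 := by
            exact pow_lt_pow_left₀ (hcon li) (abs_nonneg _) (by norm_num)
    have h1 : (3 * σ * Real.sqrt d * c) ^ 2 ≤ ∑ li : Σ l : Fin L, Fin (dl l), (x li ω) ^ 2 :=
      (Real.le_sqrt htnn (Finset.sum_nonneg fun li _ => sq_nonneg _)).mp hω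
    rw [hRHS, ← hLHS] at h1
    linarith
  -- per-coordinate tail bound
  have htail' : ∀ li : Σ l : Fin L, Fin (dl l),
      μ (S li) ≤ ENNReal.ofReal (4 * c⁻¹ ^ (α li.1)) := by
    rintro ⟨l, i⟩
    have h1 := htail l i (3 * σl l * c) (hcb l)
    have h2 : 3 * σl l / (3 * σl l * c) = c⁻¹ := by
      rw [← div_div, div_self (ne_of_gt (by linarith [hσl l] : (0 : ℝ) < 3 * σl l)), one_div]
    rwa [h2] at h1
  -- final numeric bound
  have hcinv0 : 0 < c⁻¹ := by positivity
  have hcinv1 : c⁻¹ ≤ 1 := by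
    rw [inv_le_one_iff₀]; right; linarith
  have hcard : (Fintype.card (Σ l : Fin L, Fin (dl l)) : ℝ) = d := by
    rw [Fintype.card_sigma]
    simp [hd]
  have hfinal : ∑ li : Σ l : Fin L, Fin (dl l), 4 * c⁻¹ ^ (α li.1) ≤ δ := by
    have hstep : ∀ li : Σ l : Fin L, Fin (dl l),
        4 * c⁻¹ ^ (α li.1) ≤ 4 * c⁻¹ ^ αmin := by
      intro li
      have := Real.rpow_le_rpow_of_exponent_ge hcinv0 hcinv1 (hminle li.1)
      linarith
    have h1 : ∑ li : Σ l : Fin L, Fin (dl l), 4 * c⁻¹ ^ (α li.1)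
        ≤ ∑ _li : Σ l : Fin L, Fin (dl l), 4 * c⁻¹ ^ αmin :=
      Finset.sum_le_sum fun li _ => hstep li
    have h2 : ∑ _li : Σ l : Fin L, Fin (dl l), 4 * c⁻¹ ^ αmin
        = (d : ℝ) * (4 * c⁻¹ ^ αmin) := by
      rw [Finset.sum_const, Finset.card_univ, nsmul_eq_mul, hcard]
    have h3 : c⁻¹ ^ αmin = δ / (4 * d) := by
      rw [Real.inv_rpow hc0.le, hcpow, inv_div]
    have hdne : (d : ℝ) ≠ 0 := hdpos.ne'
    calc ∑ li : Σ l : Fin L, Fin (dl l), 4 * c⁻¹ ^ (α li.1)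
        ≤ (d : ℝ) * (4 * c⁻¹ ^ αmin) := h1.trans_eq h2
      _ = δ := by
          rw [h3]
          field_simp
  calc μ {ω | 3 * σ * Real.sqrt d * c ≤
        Real.sqrt (∑ li : Σ l : Fin L, Fin (dl l), (x li ω) ^ 2)}
      ≤ μ (⋃ li ∈ Finset.univ, S li) := measure_mono hsubset
    _ ≤ ∑ li : Σ l : Fin L, Fin (dl l), μ (S li) := measure_biUnion_finset_le _ _
    _ ≤ ∑ li : Σ l : Fin L, Fin (dl l), ENNReal.ofReal (4 * c⁻¹ ^ (α li.1)) :=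
        Finset.sum_le_sum fun li _ => htail' li
    _ = ENNReal.ofReal (∑ li : Σ l : Fin L, Fin (dl l), 4 * c⁻¹ ^ (α li.1)) :=
        (ENNReal.ofReal_sum_of_nonneg fun li _ =>
          mul_nonneg (by norm_num) (Real.rpow_nonneg hcinv0.le _)).symm
    _ ≤ ENNReal.ofReal δ := ENNReal.ofReal_le_ofReal hfinal
end
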